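/- arXiv:2005.12604 — 8 statements merged into one kernel-verified Lean document; each statement's English description precedes it below -/
import Mathlib

section
/- Sufficient decrease property of the block Bregman proximal gradient step: Let V and W be finite-dimensional real inner product spaces, let f : V × W → ℝ be such that u ↦ f(u, w) is continuously differentiable for every fixed w ∈ W, let g : V → ℝ be convex and lower semicontinuous, let S ⊆ V be a nonempty closed convex set, and let h : V → ℝ be continuously differentiable and γ-strongly convex (γ > 0). Fix w ∈ W and suppose there exists R > 0 such that u ↦ R·h(u) − f(u, w) is convex. Let x ∈ S, α > 0, and let x⁺ ∈ S minimize z ↦ g(z) + ⟪∇₁f(x, w), z − x⟫ + (1/α)·D_h(z, x) over S, where ∇₁f denotes the gradient in the first variable. Then (f(x, w) + g(x)) − (f(x⁺, w) + g(x⁺)) ≥ (1/α − R)·D_h(x⁺, x); in particular, if 0 < α ≤ 1/R, then (f(x, w) + g(x)) − (f(x⁺, w) + g(x⁺)) ≥ (1/α − R)·(γ/2)·‖x⁺ − x‖². -/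
open scoped RealInnerProductSpace

/-- Gradient inequality for convex differentiable functions. -/
lemma convex_grad_ineq {V : Type*} [NormedAddCommGroup V] [InnerProductSpace ℝ V] [CompleteSpace V]
    {φ : V → ℝ} (hφ : ConvexOn ℝ Set.univ φ) {x G : V} (hd : HasGradientAt φ G x) (y : V) :
    φ x + ⟪G, y - x⟫ ≤ φ y := by
  rcases eq_or_ne y x with rfl | hne
  · simp
  have hψconv : ConvexOn ℝ Set.univ (φ ∘ (AffineMap.lineMap x y : ℝ →ᵃ[ℝ] V)) := by
    have := hφ.comp_affineMap (AffineMap.lineMap x y : ℝ →ᵃ[ℝ] V)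
    simpa using this
  have hc : HasDerivAt (fun t : ℝ => (AffineMap.lineMap x y : ℝ →ᵃ[ℝ] V) t) (y - x) 0 := by
    simp only [AffineMap.lineMap_apply, vsub_eq_sub, vadd_eq_add]
    simpa using ((hasDerivAt_id (0:ℝ)).smul_const (y - x)).add_const x
  have hF : HasFDerivAt φ (InnerProductSpace.toDual ℝ V G : V →L[ℝ] ℝ) x :=
    hasGradientAt_iff_hasFDerivAt.mp hd
  have hψ : HasDerivAt (φ ∘ (AffineMap.lineMap x y : ℝ →ᵃ[ℝ] V)) ⟪G, y - x⟫ 0 := by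
    have h0 : (AffineMap.lineMap x y : ℝ →ᵃ[ℝ] V) 0 = x := by simp
    have hF0 : HasFDerivAt φ (InnerProductSpace.toDual ℝ V G : V →L[ℝ] ℝ)
        ((AffineMap.lineMap x y : ℝ →ᵃ[ℝ] V) 0) := by rw [h0]; exact hF
    have := hF0.comp_hasDerivAt (0:ℝ) hc
    simpa [InnerProductSpace.toDual_apply_apply] using this
  have hs := hψconv.le_slope_of_hasDerivAt (Set.mem_univ (0:ℝ)) (Set.mem_univ (1:ℝ))
    one_pos hψ
  have hslope : slope (φ ∘ (AffineMap.lineMap x y : ℝ →ᵃ[ℝ] V)) 0 1 = φ y - φ x := by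
    simp [slope_def_field, Function.comp]
  rw [hslope] at hs
  linarith

/-- Sufficient decrease property of the block Bregman proximal gradient step. -/
theorem stmt2 {V W : Type*} [NormedAddCommGroup V] [InnerProductSpace ℝ V]
    [FiniteDimensional ℝ V] [NormedAddCommGroup W] [InnerProductSpace ℝ W]
    [FiniteDimensional ℝ W]
    (f : V × W → ℝ) (hf : ∀ w : W, ContDiff ℝ 1 (fun u : V => f (u, w)))
    (g : V → ℝ) (hg_conv : ConvexOn ℝ Set.univ g) (hg_lsc : LowerSemicontinuous g)
    (S : Set V) (hS_ne : S.Nonempty) (hS_closed : IsClosed S) (hS_conv : Convex ℝ S)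
    (h : V → ℝ) (hh : ContDiff ℝ 1 h)
    (γ : ℝ) (hγ : 0 < γ)
    (hh_sc : ConvexOn ℝ Set.univ (fun x => h x - γ / 2 * ‖x‖ ^ 2))
    (w : W) (R : ℝ) (hR : 0 < R)
    (hrel : ConvexOn ℝ Set.univ (fun u : V => R * h u - f (u, w)))
    (x : V) (hx : x ∈ S) (α : ℝ) (hα : 0 < α)
    (xp : V) (hxp : xp ∈ S)
    (hmin : ∀ z ∈ S,
      g xp + ⟪gradient (fun u : V => f (u, w)) x, xp - x⟫ +
          (1 / α) * (h xp - h x - ⟪gradient h x, xp - x⟫)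
        ≤ g z + ⟪gradient (fun u : V => f (u, w)) x, z - x⟫ +
          (1 / α) * (h z - h x - ⟪gradient h x, z - x⟫)) :
    (f (x, w) + g x) - (f (xp, w) + g xp)
        ≥ (1 / α - R) * (h xp - h x - ⟪gradient h x, xp - x⟫) ∧
    (α ≤ 1 / R →
      (f (x, w) + g x) - (f (xp, w) + g xp)
        ≥ (1 / α - R) * (γ / 2) * ‖xp - x‖ ^ 2) := by
  have hhd : Differentiable ℝ h := hh.differentiable one_ne_zero
  have hfd : Differentiable ℝ (fun u : V => f (u, w)) := (hf w).differentiable one_ne_zero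
  set Gf := gradient (fun u : V => f (u, w)) x with hGf
  set Gh := gradient h x with hGh
  set D := h xp - h x - ⟪Gh, xp - x⟫ with hD
  -- from optimality at z = x
  have h1 : g xp + ⟪Gf, xp - x⟫ + (1 / α) * D ≤ g x := by
    have := hmin x hx
    simpa using this
  -- gradient of u ↦ R * h u - f (u, w)
  have ghF : HasFDerivAt h (InnerProductSpace.toDual ℝ V Gh : V →L[ℝ] ℝ) x :=
    hasGradientAt_iff_hasFDerivAt.mp (hhd x).hasGradientAt
  have gfF : HasFDerivAt (fun u : V => f (u, w))
      (InnerProductSpace.toDual ℝ V Gf : V →L[ℝ] ℝ) x :=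
    hasGradientAt_iff_hasFDerivAt.mp (hfd x).hasGradientAt
  have hφ1 : HasGradientAt (fun u : V => R * h u - f (u, w)) (R • Gh - Gf) x := by
    have hfd1 : HasFDerivAt (fun u : V => R * h u - f (u, w))
        (R • (InnerProductSpace.toDual ℝ V Gh : V →L[ℝ] ℝ)
          - (InnerProductSpace.toDual ℝ V Gf : V →L[ℝ] ℝ)) x :=
      (ghF.const_smul R).sub gfF
    rw [hasGradientAt_iff_hasFDerivAt]
    refine hfd1.congr_fderiv ?_
    ext v
    simp [InnerProductSpace.toDual_apply_apply, real_inner_smul_left, inner_sub_left]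
  have h2 := convex_grad_ineq hrel hφ1 xp
  rw [inner_sub_left, real_inner_smul_left] at h2
  -- first conclusion
  have key : (f (x, w) + g x) - (f (xp, w) + g xp) ≥ (1 / α - R) * D := by
    have : f (xp, w) - f (x, w) ≤ ⟪Gf, xp - x⟫ + R * D := by
      simp only [hD]; nlinarith [h2]
    nlinarith [h1, this]
  refine ⟨key, fun hαR => ?_⟩
  -- strong convexity gives D ≥ γ/2 ‖xp - x‖²
  have hφ2 : HasGradientAt (fun u : V => h u - γ / 2 * ‖u‖ ^ 2) (Gh - γ • x) x := by
    have hnsq : HasFDerivAt (fun u : V => ‖u‖ ^ 2) (2 • (innerSL ℝ x)) x :=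
      (hasStrictFDerivAt_norm_sq x).hasFDerivAt
    have hfd2 : HasFDerivAt (fun u : V => h u - γ / 2 * ‖u‖ ^ 2)
        ((InnerProductSpace.toDual ℝ V Gh : V →L[ℝ] ℝ)
          - (γ / 2) • (2 • (innerSL ℝ x))) x :=
      ghF.sub (hnsq.const_smul (γ / 2))
    rw [hasGradientAt_iff_hasFDerivAt]
    refine hfd2.congr_fderiv ?_
    ext v
    simp [InnerProductSpace.toDual_apply_apply, inner_sub_left, real_inner_smul_left]
    ring
  have h3 := convex_grad_ineq hh_sc hφ2 xp
  rw [inner_sub_left, real_inner_smul_left] at h3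
  have hnorm : ‖xp - x‖ ^ 2 = ‖xp‖ ^ 2 - 2 * ⟪x, xp⟫ + ‖x‖ ^ 2 := by
    rw [← real_inner_self_eq_norm_sq, ← real_inner_self_eq_norm_sq,
      ← real_inner_self_eq_norm_sq, inner_sub_sub_self]
    ring_nf
    rw [real_inner_comm xp x]
    ring
  have hDsc : D ≥ γ / 2 * ‖xp - x‖ ^ 2 := by
    have hxpx : ⟪x, xp - x⟫ = ⟪x, xp⟫ - ‖x‖ ^ 2 := by
      rw [inner_sub_right, real_inner_self_eq_norm_sq]
    rw [hnorm]
    rw [hxpx] at h3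
    nlinarith [h3]
  have hcoef : 0 ≤ 1 / α - R := by
    have : R ≤ 1 / α := by
      rw [le_div_iff₀ hα]
      calc R * α ≤ R * (1 / R) := by
            exact mul_le_mul_of_nonneg_left hαR hR.le
        _ = 1 := by field_simp
    linarith
  calc (f (x, w) + g x) - (f (xp, w) + g xp) ≥ (1 / α - R) * D := key
    _ ≥ (1 / α - R) * (γ / 2 * ‖xp - x‖ ^ 2) := mul_le_mul_of_nonneg_left hDsc hcoef
    _ = (1 / α - R) * (γ / 2) * ‖xp - x‖ ^ 2 := by ring
end

section
/- Termination bound for the line search step size: Under the setting of the sufficient decrease property — V, W finite-dimensional real inner product spaces, f : V × W → ℝ with u ↦ f(u, w) continuously differentiable, g : V → ℝ convex lower semicontinuous, S ⊆ V nonempty closed convex, h : V → ℝ continuously differentiable and γ-strongly convex (γ > 0), w ∈ W fixed, R > 0 with u ↦ R·h(u) − f(u, w) convex, x ∈ S, and x⁺ ∈ S the minimizer over S of z ↦ g(z) + ⟪∇₁f(x, w), z − x⟫ + (1/α)·D_h(z, x) — if η > 0 and 0 < α ≤ γ/(2η + γR), then (f(x, w) + g(x)) − (f(x⁺, w) + g(x⁺))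 ≥ η·‖x⁺ − x‖². -/
open scoped RealInnerProductSpace

/-- Gradient inequality for a convex differentiable function. -/
lemma aux_convex_fderiv {V : Type*} [NormedAddCommGroup V] [InnerProductSpace ℝ V]
    (φ : V → ℝ) (hφ : ConvexOn ℝ Set.univ φ) {x : V} {L : V →L[ℝ] ℝ}
    (hL : HasFDerivAt φ L x) (y : V) :
    φ x + L (y - x) ≤ φ y := by
  set c : ℝ → V := fun t : ℝ => t • (y - x) + x with hc
  have hψc : ConvexOn ℝ Set.univ (φ ∘ c) := by
    have h2 := hφ.comp_affineMap (AffineMap.lineMap x y : ℝ →ᵃ[ℝ] V)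
    have heq : (φ ∘ (AffineMap.lineMap x y : ℝ →ᵃ[ℝ] V)) = φ ∘ c := by
      funext t
      simp [hc, AffineMap.lineMap_apply, Function.comp]
    rw [heq] at h2
    simpa using h2
  have hcd : HasDerivAt c (y - x) 0 := by
    simpa [hc] using ((hasDerivAt_id (0:ℝ)).smul_const (y - x)).add_const x
  have hx0 : c 0 = x := by simp [hc]
  have hψd : HasDerivAt (φ ∘ c) (L (y - x)) 0 :=
    HasFDerivAt.comp_hasDerivAt 0 (hx0.symm ▸ hL) hcd
  have hslope := hψc.le_slope_of_hasDerivAt (Set.mem_univ (0:ℝ)) (Set.mem_univ (1:ℝ))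
    one_pos hψd
  have hs : slope (φ ∘ c) 0 1 = φ y - φ x := by
    simp [slope, hc, Function.comp]
  rw [hs] at hslope
  linarith

/-- Termination bound for the line search step size: if `0 < α ≤ γ/(2η + γR)` then the
Bregman proximal step decreases the objective by at least `η·‖x⁺ − x‖²`. -/
theorem stmt3 {V W : Type*} [NormedAddCommGroup V] [InnerProductSpace ℝ V]
    [FiniteDimensional ℝ V] [NormedAddCommGroup W] [InnerProductSpace ℝ W]
    [FiniteDimensional ℝ W]
    (f : V × W → ℝ) (hf : ∀ w : W, ContDiff ℝ 1 (fun u : V => f (u, w)))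
    (g : V → ℝ) (hg_conv : ConvexOn ℝ Set.univ g) (hg_lsc : LowerSemicontinuous g)
    (S : Set V) (hS_ne : S.Nonempty) (hS_closed : IsClosed S) (hS_conv : Convex ℝ S)
    (h : V → ℝ) (hh : ContDiff ℝ 1 h)
    (γ : ℝ) (hγ : 0 < γ)
    (hh_sc : ConvexOn ℝ Set.univ (fun x => h x - γ / 2 * ‖x‖ ^ 2))
    (w : W) (R : ℝ) (hR : 0 < R)
    (hrel : ConvexOn ℝ Set.univ (fun u : V => R * h u - f (u, w)))
    (x : V) (hx : x ∈ S) (α : ℝ)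
    (xp : V) (hxp : xp ∈ S)
    (hmin : ∀ z ∈ S,
      g xp + ⟪gradient (fun u : V => f (u, w)) x, xp - x⟫ +
          (1 / α) * (h xp - h x - ⟪gradient h x, xp - x⟫)
        ≤ g z + ⟪gradient (fun u : V => f (u, w)) x, z - x⟫ +
          (1 / α) * (h z - h x - ⟪gradient h x, z - x⟫))
    (η : ℝ) (hη : 0 < η) (hα0 : 0 < α) (hαle : α ≤ γ / (2 * η + γ * R)) :
    (f (x, w) + g x) - (f (xp, w) + g xp) ≥ η * ‖xp - x‖ ^ 2 := by
  classical
  set fw : V → ℝ := fun u => f (u, w) with hfwdef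
  have hfd : Differentiable ℝ fw := (hf w).differentiable one_ne_zero
  have hhd : Differentiable ℝ h := hh.differentiable one_ne_zero
  set v : V := xp - x with hvdef
  set Lf : V →L[ℝ] ℝ := fderiv ℝ fw x with hLf
  set Lh : V →L[ℝ] ℝ := fderiv ℝ h x with hLh
  have hgradf : ⟪gradient fw x, v⟫ = Lf v := by
    simp [gradient, InnerProductSpace.toDual_symm_apply, hLf]
  have hgradh : ∀ u : V, ⟪gradient h x, u⟫ = Lh u := by
    intro u; simp [gradient, InnerProductSpace.toDual_symm_apply, hLh]
  -- Step A: minimality at z = x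
  have hA : g xp + Lf v + (1 / α) * (h xp - h x - Lh v) ≤ g x := by
    have := hmin x hx
    simpa [hgradf, hgradh, hvdef] using this
  -- Step B: relative smoothness (convexity of R·h − f)
  have hB : (R * h x - fw x) + (R • Lh - Lf) v ≤ R * h xp - fw xp := by
    have hd : HasFDerivAt (fun u : V => R * h u - fw u) (R • Lh - Lf) x :=
      (((hhd x).hasFDerivAt).const_mul R).sub (hfd x).hasFDerivAt
    exact aux_convex_fderiv _ hrel hd xp
  have hB' : fw x - fw xp ≥ -Lf v - R * (h xp - h x - Lh v) := by
    have he : (R • Lh - Lf) v = R * Lh v - Lf v := by simp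
    rw [he] at hB; linarith
  -- Step C: strong convexity gives Bregman lower bound
  have hDnsq : HasFDerivAt (fun u : V => ‖u‖ ^ 2)
      ((fderivInnerCLM ℝ (x, x)).comp ((ContinuousLinearMap.id ℝ V).prod
        (ContinuousLinearMap.id ℝ V))) x := by
    have := (hasFDerivAt_id x).inner ℝ (hasFDerivAt_id x)
    have heq : (fun u : V => ‖u‖ ^ 2) = fun u : V => ⟪u, u⟫ := by
      funext u; rw [real_inner_self_eq_norm_sq]
    rw [heq]
    simpa using this
  have hkd : HasFDerivAt (fun u : V => h u - γ / 2 * ‖u‖ ^ 2)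
      (Lh - (γ / 2) • ((fderivInnerCLM ℝ (x, x)).comp ((ContinuousLinearMap.id ℝ V).prod
        (ContinuousLinearMap.id ℝ V)))) x :=
    (hhd x).hasFDerivAt.sub (hDnsq.const_mul (γ / 2))
  have hC0 := aux_convex_fderiv _ hh_sc hkd xp
  have hCval : (Lh - (γ / 2) • ((fderivInnerCLM ℝ (x, x)).comp ((ContinuousLinearMap.id ℝ V).prod
      (ContinuousLinearMap.id ℝ V)))) v = Lh v - γ * ⟪x, v⟫ := by
    simp [fderivInnerCLM_apply, real_inner_comm]
    ring
  rw [hCval] at hC0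
  have hexp : ‖xp - x‖ ^ 2 = ‖xp‖ ^ 2 - 2 * ⟪x, xp⟫ + ‖x‖ ^ 2 := by
    rw [@norm_sub_sq_real V, real_inner_comm]
  have hinner : ⟪x, v⟫ = ⟪x, xp⟫ - ‖x‖ ^ 2 := by
    rw [hvdef, inner_sub_right, real_inner_self_eq_norm_sq]
  have hC : h xp - h x - Lh v ≥ γ / 2 * ‖xp - x‖ ^ 2 := by
    rw [hexp]; rw [hinner] at hC0; nlinarith
  -- combine
  have hN : (0:ℝ) ≤ ‖xp - x‖ ^ 2 := by positivity
  have hpos : 0 < 2 * η + γ * R := by positivity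
  have hαinv : 2 * η + γ * R ≤ γ / α := by
    rw [le_div_iff₀ hα0]
    have h1 := mul_le_mul_of_nonneg_left hαle hpos.le
    rwa [mul_div_cancel₀ _ (ne_of_gt hpos)] at h1
  have hgα : γ / α = γ * (1 / α) := by ring
  have hcoef : 2 * η / γ ≤ 1 / α - R := by
    rw [div_le_iff₀ hγ]
    have h2 : (1 / α - R) * γ = γ / α - γ * R := by ring
    rw [h2]
    linarith [hαinv]
  have hcoefpos : (0:ℝ) ≤ 1 / α - R := by
    have h0 : (0:ℝ) ≤ 2 * η / γ := by positivity
    linarith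
  have hDh : (0:ℝ) ≤ h xp - h x - Lh v := le_trans (by positivity) hC
  have key : (fw x + g x) - (fw xp + g xp) ≥ (1 / α - R) * (h xp - h x - Lh v) := by
    have he : (1 / α - R) * (h xp - h x - Lh v)
        = (1 / α) * (h xp - h x - Lh v) - R * (h xp - h x - Lh v) := by ring
    rw [he]; linarith
  have final : (1 / α - R) * (h xp - h x - Lh v) ≥ η * ‖xp - x‖ ^ 2 := by
    have h1 : (1 / α - R) * (h xp - h x - Lh v) ≥ (1 / α - R) * (γ / 2 * ‖xp - x‖ ^ 2) :=
      mul_le_mul_of_nonneg_left hC hcoefpos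
    have h2 : (1 / α - R) * (γ / 2 * ‖xp - x‖ ^ 2) ≥ (2 * η / γ) * (γ / 2 * ‖xp - x‖ ^ 2) := by
      have : (0:ℝ) ≤ γ / 2 * ‖xp - x‖ ^ 2 := by positivity
      exact mul_le_mul_of_nonneg_right hcoef this
    have h3 : (2 * η / γ) * (γ / 2 * ‖xp - x‖ ^ 2) = η * ‖xp - x‖ ^ 2 := by
      field_simp
    linarith
  calc (f (x, w) + g x) - (f (xp, w) + g xp) = (fw x + g x) - (fw xp + g xp) := rfl
    _ ≥ (1 / α - R) * (h xp - h x - Lh v) := key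
    _ ≥ η * ‖xp - x‖ ^ 2 := final
end

section
/- Asymptotic vanishing of steps and convergence of energies under the non-monotone decrease condition: Let V be a finite-dimensional real inner product space, let K ⊆ V, let E : V → ℝ be Lipschitz continuous on K and bounded below, let σ > 0, M ∈ ℕ, and let (X^k)_{k∈ℕ} be a sequence contained in K. For each k define a_k = max{ E(X^j) : max(k − M, 0) ≤ j ≤ k }. If for all k one has a_k − E(X^{k+1}) ≥ σ‖X^{k+1} − X^k‖², then ‖X^{k+1} − X^k‖ → 0 as k → ∞, and there exists E* ∈ ℝ, E* > −∞, such that E(X^k) → E* as k → ∞. -/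
/-- The windowed maximum `a_k = max{ E(X^j) : max(k − M, 0) ≤ j ≤ k }`. -/
noncomputable def windowMax (e : ℕ → ℝ) (M k : ℕ) : ℝ :=
  (Finset.Icc (k - M) k).sup' (Finset.nonempty_Icc.mpr (Nat.sub_le k M)) e

/-- Diagonal lemma: if finitely many sequences all tend to `c` and `h` is the diagonal
along a bounded selection, `h` tends to `c`. -/
lemma diag_tendsto {c : ℝ} {M : ℕ} (F : ℕ → ℕ → ℝ)
    (hF : ∀ j, j ≤ M → Filter.Tendsto (F j) Filter.atTop (nhds c))
    (g : ℕ → ℕ) (hg : ∀ k, g k ≤ M) (h : ℕ → ℝ) (hh : ∀ k, h k = F (g k) k) :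
    Filter.Tendsto h Filter.atTop (nhds c) := by
  rw [Metric.tendsto_atTop]
  intro ε hε
  have key : ∀ j : ℕ, ∃ N, ∀ k ≥ N, dist (F (min j M) k) c < ε := fun j =>
    Metric.tendsto_atTop.mp (hF (min j M) (min_le_right _ _)) ε hε
  choose N hN using key
  refine ⟨(Finset.range (M + 1)).sup N, fun k hk => ?_⟩
  have h1 : g k ∈ Finset.range (M + 1) := Finset.mem_range.mpr (Nat.lt_succ_of_le (hg k))
  have h2 : N (g k) ≤ k := le_trans (Finset.le_sup h1) hk
  have := hN (g k) k h2
  rwa [min_eq_left (hg k), ← hh k] at this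

/-- Asymptotic vanishing of steps and convergence of energies under the non-monotone
decrease condition `a_k − E(X^{k+1}) ≥ σ‖X^{k+1} − X^k‖²`. -/
theorem stmt6 {V : Type*} [NormedAddCommGroup V] [InnerProductSpace ℝ V]
    [FiniteDimensional ℝ V]
    (K : Set V) (E : V → ℝ) (L : ℝ) (hL : 0 ≤ L)
    (hLip : ∀ x ∈ K, ∀ y ∈ K, |E x - E y| ≤ L * ‖x - y‖)
    (hbdd : BddBelow (Set.range E))
    (σ : ℝ) (hσ : 0 < σ) (M : ℕ)
    (X : ℕ → V) (hX : ∀ k, X k ∈ K)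
    (hdec : ∀ k, windowMax (fun j => E (X j)) M k - E (X (k + 1))
      ≥ σ * ‖X (k + 1) - X k‖ ^ 2) :
    Filter.Tendsto (fun k => ‖X (k + 1) - X k‖) Filter.atTop (nhds 0) ∧
      ∃ Estar : ℝ, Filter.Tendsto (fun k => E (X k)) Filter.atTop (nhds Estar) := by
  classical
  set e : ℕ → ℝ := fun j => E (X j) with he
  set s : ℕ → ℝ := fun k => ‖X (k + 1) - X k‖ with hs
  set a : ℕ → ℝ := fun k => windowMax e M k with ha
  have hs_nonneg : ∀ k, 0 ≤ s k := fun k => norm_nonneg _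
  have he_le : ∀ k, ∀ j ∈ Finset.Icc (k - M) k, e j ≤ a k := fun k j hj =>
    Finset.le_sup' e hj
  have he_self : ∀ k, e k ≤ a k := fun k =>
    he_le k k (Finset.mem_Icc.mpr ⟨Nat.sub_le k M, le_refl k⟩)
  have hdec' : ∀ k, σ * s k ^ 2 ≤ a k - e (k + 1) := fun k => hdec k
  -- choose maximizing index
  have hl0 : ∀ k, ∃ j ∈ Finset.Icc (k - M) k, a k = e j := fun k =>
    Finset.exists_mem_eq_sup' (Finset.nonempty_Icc.mpr (Nat.sub_le k M)) e
  choose l hlmem hle using hl0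
  have hl_lb : ∀ k, k - M ≤ l k := fun k => (Finset.mem_Icc.mp (hlmem k)).1
  have hl_ub : ∀ k, l k ≤ k := fun k => (Finset.mem_Icc.mp (hlmem k)).2
  -- a is antitone
  have hanti : Antitone a := by
    apply antitone_nat_of_succ_le
    intro k
    apply Finset.sup'_le
    intro j hj
    rcases Finset.mem_Icc.mp hj with ⟨h1, h2⟩
    rcases Nat.lt_or_ge j (k + 1) with hj' | hj'
    · refine he_le k j (Finset.mem_Icc.mpr ⟨?_, Nat.lt_succ_iff.mp hj'⟩)
      omega
    · have hjk : j = k + 1 := le_antisymm h2 hj'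
      subst hjk
      have h3 := hdec' k
      nlinarith [hs_nonneg k, sq_nonneg (s k), mul_nonneg hσ.le (sq_nonneg (s k))]
  -- a is bounded below
  obtain ⟨B, hB⟩ := hbdd
  have haB : ∀ k, B ≤ a k := fun k => by
    rw [hle k]; exact hB ⟨X (l k), rfl⟩
  have hbdd_a : BddBelow (Set.range a) := ⟨B, by rintro _ ⟨k, rfl⟩; exact haB k⟩
  set astar := ⨅ k, a k with hastar
  have ha_lim : Filter.Tendsto a Filter.atTop (nhds astar) :=
    tendsto_atTop_ciInf hanti hbdd_a
  -- l k - c → ∞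
  have hlc : ∀ c : ℕ, Filter.Tendsto (fun k => l k - c) Filter.atTop Filter.atTop := by
    intro c
    apply Filter.tendsto_atTop_mono (fun k => Nat.sub_le_sub_right (hl_lb k) c)
    have : (fun k : ℕ => k - M - c) = fun k => k - (M + c) := by
      funext k; omega
    rw [this]
    exact Filter.tendsto_sub_atTop_nat (M + c)
  have haL : ∀ c : ℕ, Filter.Tendsto (fun k => a (l k - c)) Filter.atTop (nhds astar) :=
    fun c => ha_lim.comp (hlc c)
  -- step: from e (l k - j) → astar deduce s (l k - j - 1) → 0
  have stepS : ∀ j : ℕ,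
      Filter.Tendsto (fun k => e (l k - j)) Filter.atTop (nhds astar) →
      Filter.Tendsto (fun k => s (l k - j - 1)) Filter.atTop (nhds 0) := by
    intro j hP
    have hg0 : Filter.Tendsto (fun k => (a (l k - (j + 1)) - e (l k - j)) / σ)
        Filter.atTop (nhds 0) := by
      have := ((haL (j + 1)).sub hP).div_const σ
      simpa using this
    have hsq : Filter.Tendsto (fun k => s (l k - j - 1) ^ 2) Filter.atTop (nhds 0) := by
      apply squeeze_zero' (Filter.Eventually.of_forall fun k => sq_nonneg _) _ hg0
      filter_upwards [Filter.eventually_ge_atTop (M + j + 1)] with k hk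
      have hlk : j + 1 ≤ l k := le_trans (by omega) (hl_lb k)
      have hm : l k - j - 1 + 1 = l k - j := by omega
      have h3 := hdec' (l k - j - 1)
      rw [hm] at h3
      have h4 : l k - (j + 1) = l k - j - 1 := by omega
      rw [h4, le_div_iff₀ hσ]
      nlinarith [h3]
    have := (Real.continuous_sqrt.tendsto 0).comp hsq
    simp only [Real.sqrt_zero, Function.comp] at this
    apply this.congr
    intro k
    exact Real.sqrt_sq (hs_nonneg _)
  -- step: from e (l k - j) → astar and s (l k - j - 1) → 0 deduce e (l k - (j+1)) → astar
  have stepP : ∀ j : ℕ,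
      Filter.Tendsto (fun k => e (l k - j)) Filter.atTop (nhds astar) →
      Filter.Tendsto (fun k => s (l k - j - 1)) Filter.atTop (nhds 0) →
      Filter.Tendsto (fun k => e (l k - (j + 1))) Filter.atTop (nhds astar) := by
    intro j hP hS
    have hd : Filter.Tendsto (fun k => e (l k - j - 1) - e (l k - j))
        Filter.atTop (nhds 0) := by
      apply squeeze_zero_norm' _ (by simpa using hS.const_mul L)
      apply Filter.Eventually.of_forall
      intro k
      rcases le_or_gt (l k) j with hcase | hcase
      · have h1 : l k - j = 0 := by omega
        have h2 : l k - j - 1 = 0 := by omega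
        rw [h2, h1, sub_self, norm_zero]
        exact mul_nonneg hL (hs_nonneg _)
      · have hm : l k - j - 1 + 1 = l k - j := by omega
        have := hLip (X (l k - j - 1)) (hX _) (X (l k - j)) (hX _)
        calc ‖e (l k - j - 1) - e (l k - j)‖ = |E (X (l k - j - 1)) - E (X (l k - j))| := rfl
          _ ≤ L * ‖X (l k - j - 1) - X (l k - j)‖ := this
          _ = L * s (l k - j - 1) := by
              show L * ‖X (l k - j - 1) - X (l k - j)‖
                = L * ‖X (l k - j - 1 + 1) - X (l k - j - 1)‖
              rw [hm, norm_sub_rev]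
    have := hP.add hd
    rw [add_zero] at this
    apply this.congr
    intro k
    have : l k - (j + 1) = l k - j - 1 := by omega
    rw [this]; ring
  -- main induction
  have main : ∀ j : ℕ,
      Filter.Tendsto (fun k => e (l k - j)) Filter.atTop (nhds astar) ∧
      Filter.Tendsto (fun k => s (l k - j - 1)) Filter.atTop (nhds 0) := by
    intro j
    induction j with
    | zero =>
      have h0 : Filter.Tendsto (fun k => e (l k - 0)) Filter.atTop (nhds astar) := by
        have heq : (fun k => e (l k - 0)) = a := by
          funext k; rw [Nat.sub_zero, ← hle k]
        rw [heq]; exact ha_lim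
      exact ⟨h0, stepS 0 h0⟩
    | succ j ih =>
      have h1 := stepP j ih.1 ih.2
      exact ⟨h1, stepS (j + 1) h1⟩
  constructor
  · -- steps vanish
    apply diag_tendsto (fun j k => s (l (k + (M + 1)) - j - 1)) (M := M)
      (fun j _ => (main j).2.comp (Filter.tendsto_add_atTop_nat (M + 1)))
      (fun k => l (k + (M + 1)) - (k + 1))
      (fun k => by have := hl_ub (k + (M + 1)); omega)
    intro k
    have h1 := hl_lb (k + (M + 1))
    have h2 := hl_ub (k + (M + 1))
    have : l (k + (M + 1)) - (l (k + (M + 1)) - (k + 1)) - 1 = k := by omega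
    rw [this]
  · -- energies converge
    refine ⟨astar, ?_⟩
    apply diag_tendsto (fun j k => e (l (k + M) - j)) (M := M)
      (fun j _ => (main j).1.comp (Filter.tendsto_add_atTop_nat M))
      (fun k => l (k + M) - k)
      (fun k => by have := hl_ub (k + M); omega)
    intro k
    have h1 := hl_lb (k + M)
    have h2 := hl_ub (k + M)
    have : l (k + M) - (l (k + M) - k) = k := by omega
    rw [this]
end

section
/- Subsequence convergence to critical points: Let V be a finite-dimensional real inner product space, E : V → ℝ continuous, and define the subdifferential ∂E(x) = { u ∈ V : E(y) ≥ E(x) + ⟪u, y − x⟫ for all y ∈ V }. Let (X^k)_{k∈ℕ} be a bounded sequence in V such that ‖X^{k+1} − X^k‖ → 0, and suppose there exist constants C > 0 and T ∈ ℕ, T ≥ 1, such that for every k > 3T there exists u_k ∈ ∂E(X^k) with ‖u_k‖ ≤ C · Σ_{l = k−3T+1}^{k} ‖X^l − X^{l−1}‖. Then every limit point X* of (X^k) satisfies 0 ∈ ∂E(X*). -/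
open scoped RealInnerProductSpace
open Filter

/-- Subsequence convergence to critical points: under vanishing steps and the relative-error
bound on subgradients, every limit point `X*` of the sequence satisfies `0 ∈ ∂E(X*)`. -/
theorem stmt8 {V : Type*} [NormedAddCommGroup V] [InnerProductSpace ℝ V]
    [FiniteDimensional ℝ V]
    (E : V → ℝ) (hE : Continuous E)
    (X : ℕ → V) (hXbdd : Bornology.IsBounded (Set.range X))
    (hstep : Filter.Tendsto (fun k => ‖X (k + 1) - X k‖) Filter.atTop (nhds 0))
    (C : ℝ) (hC : 0 < C) (T : ℕ) (hT : 1 ≤ T)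
    (hsub : ∀ k, 3 * T < k → ∃ u : V,
      (∀ y : V, E y ≥ E (X k) + ⟪u, y - X k⟫) ∧
      ‖u‖ ≤ C * ∑ l ∈ Finset.Icc (k - 3 * T + 1) k, ‖X l - X (l - 1)‖)
    (Xstar : V) (φ : ℕ → ℕ) (hφ : StrictMono φ)
    (hlim : Filter.Tendsto (fun j => X (φ j)) Filter.atTop (nhds Xstar)) :
    ∀ y : V, E y ≥ E Xstar + ⟪(0 : V), y - Xstar⟫ := by
  intro y
  simp only [inner_zero_left, add_zero]
  classical
  set u : ℕ → V := fun k => if h : 3 * T < k then (hsub k h).choose else 0 with hu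
  have hu1 : ∀ k, 3 * T < k → ∀ z : V, E z ≥ E (X k) + ⟪u k, z - X k⟫ := by
    intro k h z
    simp only [hu, dif_pos h]
    exact (hsub k h).choose_spec.1 z
  have hu2 : ∀ k, 3 * T < k →
      ‖u k‖ ≤ C * ∑ l ∈ Finset.Icc (k - 3 * T + 1) k, ‖X l - X (l - 1)‖ := by
    intro k h
    simp only [hu, dif_pos h]
    exact (hsub k h).choose_spec.2
  -- the sum of step norms tends to 0
  have hsum : Tendsto (fun k => ∑ l ∈ Finset.Icc (k - 3 * T + 1) k, ‖X l - X (l - 1)‖)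
      atTop (nhds 0) := by
    rw [Metric.tendsto_atTop] at hstep ⊢
    intro ε hε
    have h3T : (0 : ℝ) < 3 * T + 1 := by positivity
    obtain ⟨N, hN⟩ := hstep (ε / (3 * T + 1)) (by positivity)
    refine ⟨N + 3 * T + 1, fun k hk => ?_⟩
    have hterm : ∀ l ∈ Finset.Icc (k - 3 * T + 1) k, ‖X l - X (l - 1)‖ ≤ ε / (3 * T + 1) := by
      intro l hl
      rw [Finset.mem_Icc] at hl
      have hl1 : l - 1 ≥ N := by omega
      have hl2 : l = (l - 1) + 1 := by omega
      have := hN (l - 1) hl1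
      rw [Real.dist_eq, sub_zero, abs_of_nonneg (norm_nonneg _)] at this
      rw [hl2]
      exact le_of_lt this
    have hcard : (Finset.Icc (k - 3 * T + 1) k).card = 3 * T := by
      rw [Nat.card_Icc]; omega
    have hsumle : ∑ l ∈ Finset.Icc (k - 3 * T + 1) k, ‖X l - X (l - 1)‖
        ≤ (3 * T : ℕ) * (ε / (3 * T + 1)) := by
      calc ∑ l ∈ Finset.Icc (k - 3 * T + 1) k, ‖X l - X (l - 1)‖
          ≤ (Finset.Icc (k - 3 * T + 1) k).card • (ε / (3 * T + 1)) :=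
            Finset.sum_le_card_nsmul _ _ _ hterm
        _ = (3 * T : ℕ) * (ε / (3 * T + 1)) := by rw [hcard, nsmul_eq_mul]
    have hnn : 0 ≤ ∑ l ∈ Finset.Icc (k - 3 * T + 1) k, ‖X l - X (l - 1)‖ :=
      Finset.sum_nonneg fun _ _ => norm_nonneg _
    rw [Real.dist_eq, sub_zero, abs_of_nonneg hnn]
    calc ∑ l ∈ Finset.Icc (k - 3 * T + 1) k, ‖X l - X (l - 1)‖
        ≤ (3 * T : ℕ) * (ε / (3 * T + 1)) := hsumle
      _ < (3 * T + 1) * (ε / (3 * T + 1)) := by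
          apply mul_lt_mul_of_pos_right _ (by positivity)
          push_cast; linarith
      _ = ε := by field_simp
  have hgtend : Tendsto (fun k => C * ∑ l ∈ Finset.Icc (k - 3 * T + 1) k, ‖X l - X (l - 1)‖)
      atTop (nhds 0) := by simpa using hsum.const_mul C
  have hnorm : Tendsto (fun k => ‖u k‖) atTop (nhds 0) := by
    apply squeeze_zero' (Eventually.of_forall fun k => norm_nonneg _) _ hgtend
    filter_upwards [eventually_gt_atTop (3 * T)] with k hk
    exact hu2 k hk
  have hnormφ : Tendsto (fun j => ‖u (φ j)‖) atTop (nhds 0) :=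
    hnorm.comp hφ.tendsto_atTop
  have hinner : Tendsto (fun j => ⟪u (φ j), y - X (φ j)⟫) atTop (nhds 0) := by
    have hg : Tendsto (fun j => ‖u (φ j)‖ * ‖y - X (φ j)‖) atTop (nhds 0) := by
      have hsubl : Tendsto (fun j => ‖y - X (φ j)‖) atTop (nhds ‖y - Xstar‖) :=
        ((tendsto_const_nhds (x := y)).sub hlim).norm
      simpa using hnormφ.mul hsubl
    exact squeeze_zero_norm (fun j => norm_inner_le_norm _ _) hg
  have hmain : Tendsto (fun j => E (X (φ j)) + ⟪u (φ j), y - X (φ j)⟫)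
      atTop (nhds (E Xstar)) := by
    have hEφ : Tendsto (fun j => E (X (φ j))) atTop (nhds (E Xstar)) :=
      (hE.tendsto Xstar).comp hlim
    simpa using hEφ.add hinner
  refine le_of_tendsto hmain ?_
  filter_upwards [eventually_gt_atTop (3 * T)] with j hj
  exact hu1 (φ j) (lt_of_lt_of_le hj hφ.le_apply) y
end

section
/- Whole-sequence convergence under a Kurdyka–Łojasiewicz-type inequality: Let V be a finite-dimensional real inner product space, E : V → ℝ continuous and bounded below, and define ∂E(x) = { u ∈ V : E(y) ≥ E(x) + ⟪u, y − x⟫ for all y ∈ V }. Let (X^k)_{k∈ℕ} be a bounded sequence in V, σ > 0, C > 0, T ∈ ℕ with T ≥ 1, E* ∈ ℝ, η > 0, k₀ ∈ ℕ with k₀ > 3T, and ψ : [0, η) → ℝ continuous with ψ(0) = 0, continuously differentiable, concave, and ψ' > 0 on (0, η). Assume: (i) sufficient decrease, E(X^k) − E(X^{k+1}) ≥ σ‖X^{k+1} − X^k‖² for all k; (ii) relative error, for every k > 3T there exists u_k ∈ ∂E(X^k) with ‖u_k‖ ≤ C · Σ_{l = k−3T+1}^{k} ‖X^l − X^{l−1}‖;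 (iii) E(X^k) → E* with E* < E(X^k) < E* + η for all k > k₀; (iv) KL inequality, ψ'(E(X^k) − E*) · ‖u‖ ≥ 1 for all u ∈ ∂E(X^k) and all k > k₀. Then Σ_{k=0}^{∞} ‖X^{k+1} − X^k‖ < ∞, and consequently there exists X* ∈ V with X^k → X*. -/
open scoped RealInnerProductSpace

set_option maxHeartbeats 2000000

lemma tel_Icc (g : ℕ → ℝ) (K : ℕ) : ∀ N, K ≤ N →
    ∑ k ∈ Finset.Icc K N, (g k - g (k + 1)) = g K - g (N + 1) := by
  intro N hN
  induction N, hN using Nat.le_induction with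
  | base => simp
  | succ n hn ih =>
    rw [Finset.sum_Icc_succ_top (by omega), ih]; ring

lemma sum_Ico_eq_sub' (a : ℕ → ℝ) (p q : ℕ) (h : p ≤ q) :
    ∑ j ∈ Finset.Ico p q, a j = (∑ i ∈ Finset.range q, a i) - ∑ i ∈ Finset.range p, a i := by
  rw [Finset.range_eq_Ico, ← Finset.sum_Ico_consecutive a (Nat.zero_le p) h]
  rw [Finset.range_eq_Ico]
  ring

lemma window_bound (A : ℕ → ℝ) (hA : Monotone A) (m K : ℕ) (hm : 1 ≤ m) (hK : m + 2 ≤ K) :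
    ∀ N, K ≤ N → ∑ k ∈ Finset.Icc K N, (A k - A (k - m)) ≤
      (∑ k ∈ Finset.Icc (N + 1 - m) N, A k) - (m : ℝ) * A (K - m) := by
  intro N hN
  induction N, hN using Nat.le_induction with
  | base =>
    rw [Finset.Icc_self, Finset.sum_singleton]
    have h1 : Finset.Icc (K + 1 - m) K = Finset.Ico (K + 1 - m) (K + 1) :=
      (Finset.Ico_add_one_right_eq_Icc ..).symm
    have h2 : ∑ k ∈ Finset.Ico (K + 1 - m) (K + 1), A k
        = (∑ k ∈ Finset.Ico (K + 1 - m) K, A k) + A K :=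
      Finset.sum_Ico_succ_top (by omega) _
    have h3 := Finset.card_nsmul_le_sum (Finset.Ico (K + 1 - m) K) A (A (K - m))
        (fun x hx => hA (by simp at hx; omega))
    have hcard : (Finset.Ico (K + 1 - m) K).card = m - 1 := by
      rw [Nat.card_Ico]; omega
    rw [hcard, nsmul_eq_mul, Nat.cast_sub hm] at h3
    rw [h1, h2]
    push_cast at h3 ⊢
    linarith
  | succ n hn ih =>
    have hstep : ∑ k ∈ Finset.Icc K (n + 1), (A k - A (k - m))
        = (∑ k ∈ Finset.Icc K n, (A k - A (k - m))) + (A (n + 1) - A (n + 1 - m)) :=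
      Finset.sum_Icc_succ_top (by omega) _
    have w1 : ∑ k ∈ Finset.Icc (n + 2 - m) (n + 1), A k
        = (∑ k ∈ Finset.Ico (n + 2 - m) (n + 1), A k) + A (n + 1) := by
      rw [← Finset.Ico_add_one_right_eq_Icc]
      exact Finset.sum_Ico_succ_top (by omega) _
    have w2 : ∑ k ∈ Finset.Icc (n + 1 - m) n, A k
        = A (n + 1 - m) + ∑ k ∈ Finset.Ico (n + 2 - m) (n + 1), A k := by
      rw [← Finset.Ico_add_one_right_eq_Icc]
      have e1 : n + 1 - m + 1 = n + 2 - m := by omega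
      rw [Finset.sum_eq_sum_Ico_succ_bot (by omega) A, e1]
    rw [hstep]
    have h2 : n + 1 + 1 - m = n + 2 - m := by omega
    rw [h2, w1]
    rw [w2] at ih
    linarith


/-- Whole-sequence convergence under a Kurdyka–Łojasiewicz-type inequality: sufficient
decrease, a relative-error bound on subgradients, convergence of the energies into the band
`(E*, E* + η)`, and the KL inequality with desingularizing function `ψ` imply that the steps
are summable and the sequence converges. -/
theorem stmt9 {V : Type*} [NormedAddCommGroup V] [InnerProductSpace ℝ V]
    [FiniteDimensional ℝ V]
    (E : V → ℝ) (hE : Continuous E) (hEbdd : BddBelow (Set.range E))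
    (X : ℕ → V) (hXbdd : Bornology.IsBounded (Set.range X))
    (σ C : ℝ) (hσ : 0 < σ) (hC : 0 < C)
    (T : ℕ) (hT : 1 ≤ T)
    (Estar η : ℝ) (hη : 0 < η)
    (k₀ : ℕ) (hk₀ : 3 * T < k₀)
    (ψ dψ : ℝ → ℝ)
    (hψ0 : ψ 0 = 0)
    (hψcont : ContinuousOn ψ (Set.Ico 0 η))
    (hψderiv : ∀ t ∈ Set.Ioo (0 : ℝ) η, HasDerivAt ψ (dψ t) t)
    (hψderiv_cont : ContinuousOn dψ (Set.Ioo 0 η))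
    (hψconc : ConcaveOn ℝ (Set.Ico 0 η) ψ)
    (hψpos : ∀ t ∈ Set.Ioo (0 : ℝ) η, 0 < dψ t)
    -- (i) sufficient decrease
    (hdec : ∀ k, E (X k) - E (X (k + 1)) ≥ σ * ‖X (k + 1) - X k‖ ^ 2)
    -- (ii) relative error
    (hrelerr : ∀ k, 3 * T < k → ∃ u : V,
      (∀ y : V, E y ≥ E (X k) + ⟪u, y - X k⟫) ∧
      ‖u‖ ≤ C * ∑ l ∈ Finset.Icc (k - 3 * T + 1) k, ‖X l - X (l - 1)‖)
    -- (iii) energy convergence into the band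
    (hElim : Filter.Tendsto (fun k => E (X k)) Filter.atTop (nhds Estar))
    (hEband : ∀ k, k₀ < k → Estar < E (X k) ∧ E (X k) < Estar + η)
    -- (iv) KL inequality
    (hKL : ∀ k, k₀ < k → ∀ u : V, (∀ y : V, E y ≥ E (X k) + ⟪u, y - X k⟫) →
      dψ (E (X k) - Estar) * ‖u‖ ≥ 1) :
    (Summable fun k => ‖X (k + 1) - X k‖) ∧
      ∃ Xstar : V, Filter.Tendsto X Filter.atTop (nhds Xstar) := by
  classical
  set a : ℕ → ℝ := fun k => ‖X (k + 1) - X k‖ with ha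
  set A : ℕ → ℝ := fun n => ∑ i ∈ Finset.range n, a i with hA
  set e : ℕ → ℝ := fun k => E (X k) - Estar with he
  set m : ℕ := 3 * T with hm
  set K : ℕ := k₀ + 1 with hK
  have hm1 : 1 ≤ m := by omega
  have hKm : m + 2 ≤ K := by omega
  clear_value a A e m K
  have hm0 : (0:ℝ) < (m:ℝ) := Nat.cast_pos.2 (by omega)
  have anonneg : ∀ k, 0 ≤ a k := by intro k; rw [ha]; exact norm_nonneg _
  have Amono : Monotone A := by
    intro i j hij
    simp only [hA]
    exact Finset.sum_le_sum_of_subset_of_nonneg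
      (Finset.range_subset_range.2 hij) (fun k _ _ => anonneg k)
  have Anonneg : ∀ n, 0 ≤ A n := by
    intro n
    simp only [hA]
    exact Finset.sum_nonneg (fun i _ => anonneg i)
  have hEdec : ∀ k, E (X (k + 1)) ≤ E (X k) := by
    intro k
    have h := hdec k
    have h2 : 0 ≤ σ * ‖X (k + 1) - X k‖ ^ 2 := by positivity
    linarith
  have heband : ∀ k, K ≤ k → e k ∈ Set.Ioo (0:ℝ) η := by
    intro k hk
    have h := hEband k (by omega)
    exact ⟨by simp only [he]; linarith [h.1], by simp only [he]; linarith [h.2]⟩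
  have hedec : ∀ k, e (k + 1) ≤ e k := by
    intro k
    simp only [he]
    linarith [hEdec k]
  -- nonnegativity of ψ on the band
  have hψnn : ∀ s, s ∈ Set.Ioo (0:ℝ) η → 0 ≤ ψ s := by
    intro s hs
    have h0 : (0:ℝ) ∈ Set.Ico (0:ℝ) η := ⟨le_refl _, hη⟩
    have hsl := hψconc.le_slope_of_hasDerivAt h0 ⟨hs.1.le, hs.2⟩ hs.1 (hψderiv s hs)
    rw [slope_def_field, hψ0, sub_zero, sub_zero] at hsl
    have h2 : 0 < ψ s / s := lt_of_lt_of_le (hψpos s hs) hsl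
    rcases div_pos_iff.1 h2 with ⟨h, _⟩ | ⟨_, h⟩
    · exact h.le
    · linarith [hs.1]
  -- concavity inequality
  have hconc : ∀ k, K ≤ k → dψ (e k) * (e k - e (k + 1)) ≤ ψ (e k) - ψ (e (k + 1)) := by
    intro k hk
    have h1 := hedec k
    rcases eq_or_lt_of_le h1 with h | h
    · rw [h]; simp
    · have hx := heband (k + 1) (by omega)
      have hy := heband k hk
      have hsl := hψconc.le_slope_of_hasDerivAt ⟨hx.1.le, hx.2⟩ ⟨hy.1.le, hy.2⟩ h
        (hψderiv (e k) hy)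
      rw [slope_def_field] at hsl
      have hpos : 0 < e k - e (k + 1) := sub_pos.2 h
      rw [le_div_iff₀ hpos] at hsl
      linarith
  -- rewrite the relative-error sum
  have hSid : ∀ k, K ≤ k →
      (∑ l ∈ Finset.Icc (k - m + 1) k, ‖X l - X (l - 1)‖) = A k - A (k - m) := by
    intro k hk
    have hk' : m + 2 ≤ k := le_trans hKm hk
    have step1 : (∑ l ∈ Finset.Icc (k - m + 1) k, ‖X l - X (l - 1)‖)
        = ∑ j ∈ Finset.Icc (k - m) (k - 1), a j := by
      have hmap : Finset.Icc (k - m + 1) k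
          = (Finset.Icc (k - m) (k - 1)).map (addRightEmbedding 1) := by
        rw [Finset.map_add_right_Icc]
        congr 1
        omega
      rw [hmap, Finset.sum_map]
      apply Finset.sum_congr rfl
      intro j hj
      simp [addRightEmbedding_apply, ha]
    rw [step1]
    have h2 : Finset.Icc (k - m) (k - 1) = Finset.Ico (k - m) k := by
      rw [← Finset.Ico_add_one_right_eq_Icc]
      congr 1
      omega
    rw [h2, sum_Ico_eq_sub' a (k - m) k (by omega), hA]
  -- master inequality
  have hmaster : ∀ k, K ≤ k → 2 * (m:ℝ) * σ * a k
      ≤ (m:ℝ) ^ 2 * C * (ψ (e k) - ψ (e (k + 1))) + σ * (A k - A (k - m)) := by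
    intro k hk
    obtain ⟨u, husub, hunorm⟩ := hrelerr k (by omega)
    have hKLk : (1:ℝ) ≤ dψ (e k) * ‖u‖ := by
      simp only [he]; exact hKL k (by omega) u husub
    have hd : 0 < dψ (e k) := hψpos _ (heband k hk)
    have hSnn : 0 ≤ A k - A (k - m) := sub_nonneg.2 (Amono (Nat.sub_le k m))
    rw [hSid k hk] at hunorm
    have hdec' : σ * a k ^ 2 ≤ e k - e (k + 1) := by
      have h := hdec k
      simp only [he, ha]
      ring_nf
      ring_nf at h
      linarith
    have hconck := hconc k hk
    have hsa : 0 ≤ σ * a k ^ 2 := mul_nonneg hσ.le (sq_nonneg _)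
    have h2 : dψ (e k) * (σ * a k ^ 2) ≤ ψ (e k) - ψ (e (k + 1)) :=
      le_trans (mul_le_mul_of_nonneg_left hdec' hd.le) hconck
    have h3 : (1:ℝ) ≤ dψ (e k) * (C * (A k - A (k - m))) :=
      le_trans hKLk (mul_le_mul_of_nonneg_left hunorm hd.le)
    have key : σ * a k ^ 2 ≤ C * (A k - A (k - m)) * (ψ (e k) - ψ (e (k + 1))) := by
      have h4 : σ * a k ^ 2 ≤ (σ * a k ^ 2) * (dψ (e k) * (C * (A k - A (k - m)))) :=
        le_mul_of_one_le_right hsa h3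
      have h6 : (C * (A k - A (k - m))) * (dψ (e k) * (σ * a k ^ 2))
          ≤ (C * (A k - A (k - m))) * (ψ (e k) - ψ (e (k + 1))) :=
        mul_le_mul_of_nonneg_left h2 (mul_nonneg hC.le hSnn)
      nlinarith [h4, h6]
    have hΔnn : 0 ≤ ψ (e k) - ψ (e (k + 1)) := by nlinarith [h2, hsa, hd]
    have h4PQ : (2 * (m:ℝ) * σ * a k) ^ 2
        ≤ 4 * ((m:ℝ) ^ 2 * C * (ψ (e k) - ψ (e (k + 1)))) * (σ * (A k - A (k - m))) := by
      have := mul_le_mul_of_nonneg_left key (by positivity : (0:ℝ) ≤ 4 * (m:ℝ) ^ 2 * σ)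
      nlinarith [this]
    have hP : 0 ≤ (m:ℝ) ^ 2 * C * (ψ (e k) - ψ (e (k + 1))) :=
      mul_nonneg (mul_nonneg (by positivity) hC.le) hΔnn
    have hQ : 0 ≤ σ * (A k - A (k - m)) := mul_nonneg hσ.le hSnn
    have hR : 0 ≤ 2 * (m:ℝ) * σ * a k := mul_nonneg (by positivity) (anonneg k)
    set Pv := (m:ℝ) ^ 2 * C * (ψ (e k) - ψ (e (k + 1))) with hPv
    set Qv := σ * (A k - A (k - m)) with hQv
    set Rv := 2 * (m:ℝ) * σ * a k with hRv
    clear_value Pv Qv Rv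
    have h5 : Rv ^ 2 ≤ (Pv + Qv) ^ 2 := by nlinarith [h4PQ, sq_nonneg (Pv - Qv)]
    nlinarith [h5, hP, hQ, hR]
  -- summing the master inequality
  have hbound : ∀ N, K ≤ N → σ * A (N + 1) ≤ 2 * σ * A K + (m:ℝ) * C * ψ (e K) := by
    intro N hN
    have hsum1 : ∑ k ∈ Finset.Icc K N, (2 * (m:ℝ) * σ * a k)
        ≤ ∑ k ∈ Finset.Icc K N,
          ((m:ℝ) ^ 2 * C * (ψ (e k) - ψ (e (k + 1))) + σ * (A k - A (k - m))) :=
      Finset.sum_le_sum (fun k hk => hmaster k (Finset.mem_Icc.1 hk).1)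
    have hAsum : ∑ k ∈ Finset.Icc K N, a k = A (N + 1) - A K := by
      rw [← Finset.Ico_add_one_right_eq_Icc, hA]
      exact sum_Ico_eq_sub' a K (N + 1) (by omega)
    rw [Finset.sum_add_distrib, ← Finset.mul_sum, ← Finset.mul_sum, ← Finset.mul_sum,
      hAsum, tel_Icc (fun k => ψ (e k)) K N hN] at hsum1
    have hwin := window_bound A Amono m K hm1 hKm N hN
    have hwcard : (Finset.Icc (N + 1 - m) N).card = m := by
      rw [Nat.card_Icc]; omega
    have hw2 : ∑ k ∈ Finset.Icc (N + 1 - m) N, A k ≤ (m:ℝ) * A N := by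
      have := Finset.sum_le_card_nsmul (Finset.Icc (N + 1 - m) N) A (A N)
        (fun x hx => Amono (by simp at hx; omega))
      rw [hwcard, nsmul_eq_mul] at this
      exact this
    have hψN : 0 ≤ ψ (e (N + 1)) := hψnn _ (heband (N + 1) (by omega))
    have hAN : A N ≤ A (N + 1) := Amono (by omega)
    have hAKm : 0 ≤ A (K - m) := Anonneg _
    -- combine
    have hwin2 : ∑ k ∈ Finset.Icc K N, (A k - A (k - m)) ≤ (m:ℝ) * A N - (m:ℝ) * A (K - m) := by
      linarith [hwin, hw2]
    have hσwin : σ * ∑ k ∈ Finset.Icc K N, (A k - A (k - m))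
        ≤ σ * ((m:ℝ) * A N - (m:ℝ) * A (K - m)) := mul_le_mul_of_nonneg_left hwin2 hσ.le
    have hx1 : σ * ((m:ℝ) * A N) ≤ σ * ((m:ℝ) * A (N + 1)) :=
      mul_le_mul_of_nonneg_left (mul_le_mul_of_nonneg_left hAN hm0.le) hσ.le
    have hx2 : 0 ≤ σ * ((m:ℝ) * A (K - m)) :=
      mul_nonneg hσ.le (mul_nonneg hm0.le hAKm)
    have hx3 : 0 ≤ (m:ℝ) ^ 2 * C * ψ (e (N + 1)) :=
      mul_nonneg (mul_nonneg (by positivity) hC.le) hψN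
    have hcomb : 2 * (m:ℝ) * σ * (A (N + 1) - A K)
        ≤ (m:ℝ) ^ 2 * C * ψ (e K) + σ * ((m:ℝ) * A (N + 1)) := by
      nlinarith [hsum1, hσwin, hx1, hx2, hx3]
    have hfin : (m:ℝ) * (σ * A (N + 1)) ≤ (m:ℝ) * (2 * σ * A K + (m:ℝ) * C * ψ (e K)) := by
      nlinarith [hcomb]
    exact le_of_mul_le_mul_left hfin hm0
  -- uniform bound on partial sums
  have hAllbound : ∀ n, A n ≤ (2 * σ * A K + (m:ℝ) * C * ψ (e K)) / σ := by
    intro n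
    rw [le_div_iff₀ hσ]
    rcases le_or_gt n (K + 1) with h | h
    · have h1 := hbound K le_rfl
      have h2 : A n ≤ A (K + 1) := Amono h
      have h3 := mul_le_mul_of_nonneg_right h2 hσ.le
      linarith
    · have h1 := hbound (n - 1) (by omega)
      have h2 : n - 1 + 1 = n := by omega
      rw [h2] at h1
      linarith
  have hsummable : Summable a := by
    apply summable_of_sum_range_le anonneg
    intro n
    have := hAllbound n
    rw [hA] at this
    exact this
  refine ⟨hsummable, ?_⟩
  rw [ha] at hsummable
  have hdsum : Summable (fun k => X (k + 1) - X k) := Summable.of_norm hsummable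
  have htend := hdsum.hasSum.tendsto_sum_nat
  have hts : ∀ n, ∑ i ∈ Finset.range n, (X (i + 1) - X i) = X n - X 0 :=
    fun n => Finset.sum_range_sub X n
  refine ⟨(∑' k, (X (k + 1) - X k)) + X 0, ?_⟩
  have htend2 : Filter.Tendsto (fun n => X n - X 0 + X 0) Filter.atTop
      (nhds ((∑' k, (X (k + 1) - X k)) + X 0)) := by
    apply Filter.Tendsto.add_const
    simpa only [hts] using htend
  simpa using htend2
end

section
/- Closed-form solution of the constrained proximal subproblem with Euclidean Bregman divergence (case h(x) = ‖x‖²/2): Let N ≥ 1, let D be an N × N real diagonal matrix with nonnegative diagonal entries, let G(φ) = (1/2)⟪φ, Dφ⟫, let e₁ be the first standard basis vector of ℝ^N, let S = { φ ∈ ℝ^N : ⟪e₁, φ⟫ = 0 }, let P₁ = I − e₁e₁ᵀ, let α > 0, v ∈ ℝ^N, and ψ ∈ S. Then the point φ* = (αD + I)⁻¹(ψ − α P₁ v) lies in S and is the unique minimizer over S of the function φ ↦ G(φ) + ⟪v, φ − ψ⟫ + (1/(2α))‖φ − ψ‖². -/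
open scoped RealInnerProductSpace

lemma keyquad (d α v ψ x : ℝ) (hd : 0 ≤ d) (hα : 0 < α) :
    (1/2)*d*x^2 + v*(x-ψ) + (1/(2*α))*(x-ψ)^2
      - ((1/2)*d*((α*d+1)⁻¹*(ψ-α*v))^2 + v*((α*d+1)⁻¹*(ψ-α*v)-ψ)
        + (1/(2*α))*((α*d+1)⁻¹*(ψ-α*v)-ψ)^2)
    = (d/2 + 1/(2*α))*(x-(α*d+1)⁻¹*(ψ-α*v))^2 := by
  have h1 : α*d+1 ≠ 0 := by positivity
  have h2 : α ≠ 0 := ne_of_gt hα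
  field_simp
  ring

/-- Closed-form solution of the constrained proximal subproblem with Euclidean Bregman
divergence (case `h(x) = ‖x‖²/2`): with `D = diag(d)` (nonnegative entries),
`G(φ) = (1/2)⟪φ, Dφ⟫`, `S = {φ : ⟪e₁, φ⟫ = 0}` and `P₁ = I − e₁e₁ᵀ`, the point
`φ* = (αD + I)⁻¹(ψ − αP₁v)` lies in `S` and is the unique minimizer over `S` of
`φ ↦ G(φ) + ⟪v, φ − ψ⟫ + (1/(2α))‖φ − ψ‖²`. -/
theorem stmt10 (N : ℕ) (hN : 0 < N)
    (d : Fin N → ℝ) (hd : ∀ i, 0 ≤ d i)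
    (α : ℝ) (hα : 0 < α)
    (v ψ : EuclideanSpace ℝ (Fin N))
    (hψ : ψ ⟨0, hN⟩ = 0)
    (φstar : EuclideanSpace ℝ (Fin N))
    (hφstar : ∀ i : Fin N, φstar i = (α * d i + 1)⁻¹ *
      (ψ i - α * (v i - (if i = ⟨0, hN⟩ then v ⟨0, hN⟩ else 0)))) :
    φstar ⟨0, hN⟩ = 0 ∧
    (∀ φ : EuclideanSpace ℝ (Fin N), φ ⟨0, hN⟩ = 0 →
      (1 / 2) * ∑ i, d i * φstar i ^ 2 + ⟪v, φstar - ψ⟫ + (1 / (2 * α)) * ‖φstar - ψ‖ ^ 2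
        ≤ (1 / 2) * ∑ i, d i * φ i ^ 2 + ⟪v, φ - ψ⟫ + (1 / (2 * α)) * ‖φ - ψ‖ ^ 2) ∧
    (∀ φ' : EuclideanSpace ℝ (Fin N), φ' ⟨0, hN⟩ = 0 →
      (∀ φ : EuclideanSpace ℝ (Fin N), φ ⟨0, hN⟩ = 0 →
        (1 / 2) * ∑ i, d i * φ' i ^ 2 + ⟪v, φ' - ψ⟫ + (1 / (2 * α)) * ‖φ' - ψ‖ ^ 2
          ≤ (1 / 2) * ∑ i, d i * φ i ^ 2 + ⟪v, φ - ψ⟫ + (1 / (2 * α)) * ‖φ - ψ‖ ^ 2) →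
      φ' = φstar) := by
  set F : EuclideanSpace ℝ (Fin N) → ℝ := fun φ =>
    ∑ i, ((1/2)*d i*(φ i)^2 + v i*(φ i - ψ i) + (1/(2*α))*(φ i - ψ i)^2) with hF
  have hφ0 : φstar ⟨0, hN⟩ = 0 := by
    rw [hφstar]; simp [hψ]
  have hexpand : ∀ φ : EuclideanSpace ℝ (Fin N),
      (1 / 2) * ∑ i, d i * φ i ^ 2 + ⟪v, φ - ψ⟫ + (1 / (2 * α)) * ‖φ - ψ‖ ^ 2 = F φ := by
    intro φ
    have h1 : ⟪v, φ - ψ⟫ = ∑ i, v i * (φ i - ψ i) := by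
      simp [PiLp.inner_apply, RCLike.inner_apply, conj_trivial]
      exact Finset.sum_congr rfl (fun i _ => mul_comm _ _)
    have h2 : ‖φ - ψ‖ ^ 2 = ∑ i, (φ i - ψ i) ^ 2 := by
      rw [← real_inner_self_eq_norm_sq]
      simp [PiLp.inner_apply, RCLike.inner_apply, conj_trivial, sq]
      rw [← sq, EuclideanSpace.norm_eq, Real.sq_sqrt (Finset.sum_nonneg (fun i _ => by positivity))]
      simp [Real.norm_eq_abs, sq_abs, sq]
    rw [h1, h2, hF]
    simp only [Finset.mul_sum]
    rw [← Finset.sum_add_distrib, ← Finset.sum_add_distrib]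
    exact Finset.sum_congr rfl (fun i _ => by ring)
  have hdiff : ∀ φ : EuclideanSpace ℝ (Fin N), φ ⟨0, hN⟩ = 0 →
      F φ - F φstar = ∑ i, (d i/2 + 1/(2*α))*(φ i - φstar i)^2 := by
    intro φ hφ
    rw [hF]
    rw [← Finset.sum_sub_distrib]
    refine Finset.sum_congr rfl (fun i _ => ?_)
    by_cases hi : i = ⟨0, hN⟩
    · subst hi; rw [hφ, hφ0]; ring
    · have hs : φstar i = (α*d i+1)⁻¹*(ψ i - α*v i) := by
        rw [hφstar i]; simp [hi]
      rw [hs]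
      exact keyquad (d i) α (v i) (ψ i) (φ i) (hd i) hα
  have hnn : ∀ φ : EuclideanSpace ℝ (Fin N), φ ⟨0, hN⟩ = 0 →
      0 ≤ F φ - F φstar := by
    intro φ hφ
    rw [hdiff φ hφ]
    refine Finset.sum_nonneg (fun i _ => ?_)
    have := hd i
    positivity
  refine ⟨hφ0, ?_, ?_⟩
  · intro φ hφ
    rw [hexpand φstar, hexpand φ]
    linarith [hnn φ hφ]
  · intro φ' hφ' hmin
    have h1 := hmin φstar hφ0
    rw [hexpand φstar, hexpand φ'] at h1
    have h2 := hnn φ' hφ'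
    have heq : F φ' - F φstar = 0 := le_antisymm (by linarith) h2
    rw [hdiff φ' hφ'] at heq
    have hz : ∀ i ∈ Finset.univ, (d i/2 + 1/(2*α))*(φ' i - φstar i)^2 = 0 := by
      rw [← Finset.sum_eq_zero_iff_of_nonneg]
      · exact heq
      · intro i _
        have := hd i
        positivity
    ext i
    have := hz i (Finset.mem_univ i)
    have hc : 0 < d i/2 + 1/(2*α) := by have := hd i; positivity
    have : (φ' i - φstar i)^2 = 0 := by
      rcases mul_eq_zero.mp this with h | h
      · exact absurd h (ne_of_gt hc)
      · exact h
    have := pow_eq_zero_iff (n := 2) (by norm_num) |>.mp this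
    linarith [this]
end

section
/- Characterization of the constrained proximal subproblem with quartic Bregman kernel (case h(x) = (a/4)‖x‖⁴ + (b/2)‖x‖² + 1 with a, b > 0): Let N ≥ 1, let D be an N × N real diagonal matrix with nonnegative diagonal entries, let G(φ) = (1/2)⟪φ, Dφ⟫, let e₁ be the first standard basis vector of ℝ^N, S = { φ ∈ ℝ^N : ⟪e₁, φ⟫ = 0 }, P₁ = I − e₁e₁ᵀ, α > 0, v ∈ ℝ^N, ψ ∈ S, and let a, b > 0. Then the function φ ↦ G(φ) + ⟪v, φ − ψ⟫ + (1/α)·D_h(φ, ψ) attains a unique minimizer φ* over S, and φ* satisfies φ* = (αD + (a‖φ*‖² + b)·I)⁻¹ ( (a‖ψ‖² + b)ψ − α P₁ v ), where (a‖ψ‖² + b)ψ = ∇h(ψ). -/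
open scoped RealInnerProductSpace

/-- The objective `φ ↦ G(φ) + ⟪v, φ − ψ⟫ + (1/α)·D_h(φ, ψ)` of the constrained proximal
subproblem with quartic Bregman kernel `h(x) = (a/4)‖x‖⁴ + (b/2)‖x‖² + 1`, where
`G(φ) = (1/2)⟪φ, Dφ⟫` with `D = diag(d)` and `∇h(ψ) = (a‖ψ‖² + b)ψ`. -/
noncomputable def objQuartic (N : ℕ) (d : Fin N → ℝ) (α a b : ℝ)
    (v ψ φ : EuclideanSpace ℝ (Fin N)) : ℝ :=
  (1 / 2) * ∑ i, d i * φ i ^ 2 + ⟪v, φ - ψ⟫ +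
    (1 / α) * ((a / 4 * ‖φ‖ ^ 4 + b / 2 * ‖φ‖ ^ 2 + 1)
      - (a / 4 * ‖ψ‖ ^ 4 + b / 2 * ‖ψ‖ ^ 2 + 1)
      - ⟪(a * ‖ψ‖ ^ 2 + b) • ψ, φ - ψ⟫)

private lemma inner_sum' {N : ℕ} (x y : EuclideanSpace ℝ (Fin N)) :
    ⟪x, y⟫ = ∑ i, x i * y i := by
  simp [PiLp.inner_apply, RCLike.inner_apply, conj_trivial]
  exact Finset.sum_congr rfl fun _ _ => mul_comm _ _

private lemma norm_sq_sum' {N : ℕ} (x : EuclideanSpace ℝ (Fin N)) :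
    ‖x‖ ^ 2 = ∑ i, x i ^ 2 := by
  rw [← real_inner_self_eq_norm_sq]
  simp only [PiLp.inner_apply, RCLike.inner_apply, conj_trivial, sq]

private lemma norm_pow4_sum' {N : ℕ} (x : EuclideanSpace ℝ (Fin N)) :
    ‖x‖ ^ 4 = (∑ i, x i ^ 2) ^ 2 := by
  rw [← norm_sq_sum', ← pow_mul]

set_option maxHeartbeats 1000000 in
/-- Characterization of the constrained proximal subproblem with quartic Bregman kernel:
the objective attains a unique minimizer `φ*` over `S = {φ : ⟪e₁, φ⟫ = 0}`, and `φ*`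
satisfies `φ* = (αD + (a‖φ*‖² + b)I)⁻¹((a‖ψ‖² + b)ψ − αP₁v)`. -/
theorem stmt11 (N : ℕ) (hN : 0 < N)
    (d : Fin N → ℝ) (hd : ∀ i, 0 ≤ d i)
    (α : ℝ) (hα : 0 < α) (a b : ℝ) (ha : 0 < a) (hb : 0 < b)
    (v ψ : EuclideanSpace ℝ (Fin N)) (hψ : ψ ⟨0, hN⟩ = 0) :
    ∃ φstar : EuclideanSpace ℝ (Fin N),
      φstar ⟨0, hN⟩ = 0 ∧
      (∀ φ : EuclideanSpace ℝ (Fin N), φ ⟨0, hN⟩ = 0 →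
        objQuartic N d α a b v ψ φstar ≤ objQuartic N d α a b v ψ φ) ∧
      (∀ φ' : EuclideanSpace ℝ (Fin N), φ' ⟨0, hN⟩ = 0 →
        (∀ φ : EuclideanSpace ℝ (Fin N), φ ⟨0, hN⟩ = 0 →
          objQuartic N d α a b v ψ φ' ≤ objQuartic N d α a b v ψ φ) →
        φ' = φstar) ∧
      (∀ i : Fin N, φstar i = (α * d i + (a * ‖φstar‖ ^ 2 + b))⁻¹ *
        ((a * ‖ψ‖ ^ 2 + b) * ψ i
          - α * (v i - (if i = ⟨0, hN⟩ then v ⟨0, hN⟩ else 0)))) := by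
  classical
  have hαne : α ≠ 0 := hα.ne'
  set i0 : Fin N := ⟨0, hN⟩ with hi0
  set c : Fin N → ℝ :=
    fun i => (a * ‖ψ‖ ^ 2 + b) * ψ i - α * (v i - if i = i0 then v i0 else 0) with hc
  set g : ℝ → ℝ := fun t => ∑ i, (c i / (α * d i + (a * t + b))) ^ 2 with hg
  have hden : ∀ t : ℝ, 0 ≤ t → ∀ i, 0 < α * d i + (a * t + b) := by
    intro t ht i
    have h1 : 0 ≤ α * d i := mul_nonneg hα.le (hd i)
    have h2 : 0 ≤ a * t := mul_nonneg ha.le ht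
    linarith
  obtain ⟨t₀, ht₀, hfix⟩ : ∃ t, 0 ≤ t ∧ g t = t := by
    have hg0 : 0 ≤ g 0 := by
      simp only [hg]
      exact Finset.sum_nonneg fun i _ => sq_nonneg _
    set T1 : ℝ := g 0 + 1 with hT1
    have hT1pos : (0:ℝ) ≤ T1 := by linarith
    have hcont : ContinuousOn (fun t => g t - t) (Set.Icc 0 T1) := by
      simp only [hg]
      apply ContinuousOn.sub _ continuousOn_id
      apply continuousOn_finset_sum
      intro i _
      apply ContinuousOn.pow
      apply ContinuousOn.div continuousOn_const
      · fun_prop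
      · intro t ht
        exact (hden t ht.1 i).ne'
    have hgT1 : g T1 ≤ g 0 := by
      simp only [hg]
      apply Finset.sum_le_sum
      intro i _
      rw [div_pow, div_pow]
      have h0 := hden 0 le_rfl i
      have h1 := hden T1 hT1pos i
      have hle : α * d i + (a * 0 + b) ≤ α * d i + (a * T1 + b) := by
        have : 0 ≤ a * T1 := mul_nonneg ha.le hT1pos
        linarith
      apply div_le_div_of_nonneg_left (sq_nonneg _) (by positivity)
      nlinarith
    have hmem : (0:ℝ) ∈ Set.Icc ((fun t => g t - t) T1) ((fun t => g t - t) 0) := by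
      rw [Set.mem_Icc]
      constructor
      · show g T1 - T1 ≤ 0
        linarith
      · show (0:ℝ) ≤ g 0 - 0
        linarith
    obtain ⟨t₀, htmem, hteq⟩ := intermediate_value_Icc' hT1pos hcont hmem
    refine ⟨t₀, htmem.1, ?_⟩
    have h2 : g t₀ - t₀ = 0 := hteq
    linarith
  have hdpos : ∀ i, 0 < α * d i + (a * t₀ + b) := hden t₀ ht₀
  set φs : EuclideanSpace ℝ (Fin N) := (WithLp.toLp 2 (fun i => c i / (α * d i + (a * t₀ + b)))) with hφs
  have hφsi : ∀ i, φs i = c i / (α * d i + (a * t₀ + b)) := fun i => rfl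
  have hT : ‖φs‖ ^ 2 = t₀ := by
    rw [norm_sq_sum']
    simp only [hg] at hfix
    simpa only [hφsi] using hfix
  have hstat : ∀ i, (α * d i + (a * ‖φs‖ ^ 2 + b)) * φs i = c i := by
    intro i
    rw [hT, hφsi i]
    have hne := (hdpos i).ne'
    field_simp
  have hφs0 : φs i0 = 0 := by
    rw [hφsi i0]
    have : c i0 = 0 := by simp [hc, hψ]
    rw [this, zero_div]
  -- key inequality: strong minimality
  have key : ∀ φ : EuclideanSpace ℝ (Fin N), φ i0 = 0 →
      objQuartic N d α a b v ψ φs + b / (2*α) * ‖φ - φs‖^2 ≤ objQuartic N d α a b v ψ φ := by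
    intro φ hφ0
    set S' : ℝ := ∑ i, φ i ^ 2 with hS'
    set T' : ℝ := ∑ i, φs i ^ 2 with hT'
    set U' : ℝ := ∑ i, ψ i ^ 2 with hU'
    set P' : ℝ := ∑ i, φs i * φ i with hP'
    set W1 : ℝ := ∑ i, ψ i * φ i with hW1
    set W2 : ℝ := ∑ i, ψ i * φs i with hW2
    set V1 : ℝ := ∑ i, v i * φ i with hV1
    set V3 : ℝ := ∑ i, v i * φs i with hV3
    set Vp : ℝ := ∑ i, v i * ψ i with hVp
    set A1 : ℝ := ∑ i, d i * φ i ^ 2 with hA1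
    set A2 : ℝ := ∑ i, d i * φs i ^ 2 with hA2
    set A3 : ℝ := ∑ i, d i * (φ i * φs i) with hA3
    set K2 : ℝ := a * U' + b with hK2
    have hTnorm : T' = ‖φs‖ ^ 2 := by rw [hT', ← norm_sq_sum']
    have hK2norm : K2 = a * ‖ψ‖ ^ 2 + b := by rw [hK2, hU', ← norm_sq_sum']
    -- expansion of the stationarity sum
    have c5 : ∑ i, ((α * d i + (a * T' + b)) * φs i - K2 * ψ i + α * v i) * (φ i - φs i)
        = α * A3 - α * A2 + (a * T' + b) * (P' - T') - K2 * (W1 - W2)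
          + α * (V1 - V3) := by
      rw [hA3, hA2, hP', hW1, hW2, hV1, hV3]
      conv_rhs => rw [hT']
      trans ∑ i, (α * (d i * (φ i * φs i)) - α * (d i * φs i ^ 2)
        + ((a * T' + b) * (φs i * φ i) - (a * T' + b) * φs i ^ 2)
        - (K2 * (ψ i * φ i) - K2 * (ψ i * φs i))
        + (α * (v i * φ i) - α * (v i * φs i)))
      · exact Finset.sum_congr rfl fun i _ => by ring
      · simp only [Finset.sum_add_distrib, Finset.sum_sub_distrib, ← Finset.mul_sum]
        ring
    have hz : α * A3 - α * A2 + (a * T' + b) * (P' - T') - K2 * (W1 - W2)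
        + α * (V1 - V3) = 0 := by
      rw [← c5]
      apply Finset.sum_eq_zero
      intro i _
      have hsi : (α * d i + (a * T' + b)) * φs i = c i := by
        rw [hTnorm]
        exact hstat i
      rw [hsi, hK2norm]
      by_cases h : i = i0
      · subst h
        rw [hφ0, hφs0]
        ring
      · have hci : c i = (a * ‖ψ‖ ^ 2 + b) * ψ i - α * v i := by
          simp [hc, h]
        rw [hci]
        ring
    have c6 : ∑ i, d i * (φ i - φs i) ^ 2 = A1 - 2 * A3 + A2 := by
      rw [hA1, hA2, hA3]
      trans ∑ i, (d i * φ i ^ 2 - 2 * (d i * (φ i * φs i)) + d i * φs i ^ 2)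
      · exact Finset.sum_congr rfl fun i _ => by ring
      · rw [Finset.sum_add_distrib, Finset.sum_sub_distrib, ← Finset.mul_sum]
    have hSig2 : 0 ≤ A1 - 2 * A3 + A2 := by
      rw [← c6]
      exact Finset.sum_nonneg fun i _ => mul_nonneg (hd i) (sq_nonneg _)
    have hQ : 0 ≤ a/4 * S' ^ 2 + 3*a/4 * T' ^ 2 - a * T' * P' := by
      rw [hS', hT', hP', ← norm_sq_sum' φ, ← norm_sq_sum' φs, ← inner_sum' φs φ]
      have hle : ⟪φs, φ⟫ ≤ ‖φs‖ * ‖φ‖ := real_inner_le_norm φs φ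
      have hle2 : ‖φs‖ ^ 2 * ⟪φs, φ⟫ ≤ ‖φs‖ ^ 2 * (‖φs‖ * ‖φ‖) :=
        mul_le_mul_of_nonneg_left hle (sq_nonneg _)
      have hfac : 0 ≤ a * ((‖φ‖ - ‖φs‖) ^ 2 * (‖φ‖ ^ 2 + 2 * ‖φ‖ * ‖φs‖ + 3 * ‖φs‖ ^ 2)) := by
        have hx := norm_nonneg φ
        have hy := norm_nonneg φs
        positivity
      nlinarith [mul_le_mul_of_nonneg_left hle2 ha.le]
    have c7 : ‖φ - φs‖ ^ 2 = S' - 2 * P' + T' := by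
      rw [hS', hP', hT', norm_sq_sum']
      simp only [PiLp.sub_apply]
      trans ∑ i, (φ i ^ 2 - 2 * (φs i * φ i) + φs i ^ 2)
      · exact Finset.sum_congr rfl fun i _ => by ring
      · rw [Finset.sum_add_distrib, Finset.sum_sub_distrib, ← Finset.mul_sum]
    have cv1 : ∑ i, v i * (φ i - ψ i) = V1 - Vp := by
      rw [hV1, hVp, ← Finset.sum_sub_distrib]
      exact Finset.sum_congr rfl fun i _ => by ring
    have cv2 : ∑ i, v i * (φs i - ψ i) = V3 - Vp := by
      rw [hV3, hVp, ← Finset.sum_sub_distrib]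
      exact Finset.sum_congr rfl fun i _ => by ring
    have cw1 : ∑ i, K2 * ψ i * (φ i - ψ i) = K2 * (W1 - U') := by
      rw [hW1, hU', ← Finset.sum_sub_distrib, Finset.mul_sum]
      exact Finset.sum_congr rfl fun i _ => by ring
    have cw2 : ∑ i, K2 * ψ i * (φs i - ψ i) = K2 * (W2 - U') := by
      rw [hW2, hU', ← Finset.sum_sub_distrib, Finset.mul_sum]
      exact Finset.sum_congr rfl fun i _ => by ring
    have hid : α * (objQuartic N d α a b v ψ φ - objQuartic N d α a b v ψ φs)
        - b/2 * ‖φ - φs‖ ^ 2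
        = (α * A3 - α * A2 + (a * T' + b) * (P' - T') - K2 * (W1 - W2) + α * (V1 - V3))
          + (α/2) * (A1 - 2 * A3 + A2)
          + (a/4 * S' ^ 2 + 3*a/4 * T' ^ 2 - a * T' * P') := by
      simp only [objQuartic, inner_sum', PiLp.sub_apply, PiLp.smul_apply, smul_eq_mul]
      rw [c7]
      simp only [norm_pow4_sum' φ, norm_pow4_sum' φs, norm_pow4_sum' ψ,
        norm_sq_sum' φ, norm_sq_sum' φs, norm_sq_sum' ψ]
      simp only [← hU']
      simp only [← hS', ← hT', ← hA1, ← hA2, ← hK2]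
      rw [cv1, cv2, cw1, cw2]
      field_simp
      ring
    have hineq : b/2 * ‖φ - φs‖ ^ 2
        ≤ α * (objQuartic N d α a b v ψ φ - objQuartic N d α a b v ψ φs) := by
      have h2 : 0 ≤ (α/2) * (A1 - 2 * A3 + A2) := mul_nonneg (by positivity) hSig2
      have h5 : α * (objQuartic N d α a b v ψ φ - objQuartic N d α a b v ψ φs)
          - b/2 * ‖φ - φs‖ ^ 2
          = (α/2) * (A1 - 2 * A3 + A2) + (a/4 * S' ^ 2 + 3*a/4 * T' ^ 2 - a * T' * P') := by
        rw [hid, hz, zero_add]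
      have h6 : 0 ≤ (α/2) * (A1 - 2 * A3 + A2)
          + (a/4 * S' ^ 2 + 3*a/4 * T' ^ 2 - a * T' * P') := add_nonneg h2 hQ
      linarith [h5, h6]
    have hRid : b/(2*α) * ‖φ - φs‖ ^ 2 * α = b/2 * ‖φ - φs‖ ^ 2 := by
      field_simp
    have hfin : (objQuartic N d α a b v ψ φs + b/(2*α) * ‖φ - φs‖ ^ 2) * α
        ≤ objQuartic N d α a b v ψ φ * α := by
      rw [add_mul, hRid]
      have : objQuartic N d α a b v ψ φs * α = α * objQuartic N d α a b v ψ φs := by ring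
      rw [this]
      have h7 : objQuartic N d α a b v ψ φ * α = α * objQuartic N d α a b v ψ φ := by ring
      rw [h7]
      have h8 : α * (objQuartic N d α a b v ψ φ - objQuartic N d α a b v ψ φs)
          = α * objQuartic N d α a b v ψ φ - α * objQuartic N d α a b v ψ φs := by ring
      rw [h8] at hineq
      linarith [hineq]
    exact le_of_mul_le_mul_right hfin hα
  refine ⟨φs, hφs0, ?_, ?_, ?_⟩
  · intro φ hφ0
    have h := key φ hφ0
    have h2 : 0 ≤ b/(2*α) * ‖φ - φs‖ ^ 2 := by positivity
    linarith
  · intro φ' hφ'0 hmin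
    have h1 := key φ' hφ'0
    have h2 := hmin φs hφs0
    have hpos : 0 < b/(2*α) := by positivity
    have h3 : ‖φ' - φs‖ ^ 2 ≤ 0 := by nlinarith [sq_nonneg ‖φ' - φs‖]
    have h4 : ‖φ' - φs‖ = 0 := by nlinarith [norm_nonneg (φ' - φs), sq_nonneg ‖φ' - φs‖]
    exact sub_eq_zero.mp (norm_eq_zero.mp h4)
  · intro i
    have hne : (α * d i + (a * ‖φs‖ ^ 2 + b)) ≠ 0 := by
      rw [hT]
      exact (hdpos i).ne'
    have hrfl : c i = (a * ‖ψ‖ ^ 2 + b) * ψ i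
        - α * (v i - if i = i0 then v i0 else 0) := rfl
    rw [← hrfl, ← hstat i, inv_mul_cancel_left₀ hne]
end

section
/- Relative smoothness of quartic polynomials with respect to the quartic kernel: Let N ≥ 1 and let f : ℝ^N → ℝ be a polynomial function of total degree at most 4 (the evaluation of a multivariate real polynomial of total degree ≤ 4). Then there exists R > 0 such that the function x ↦ R·( (1/4)‖x‖⁴ + (1/2)‖x‖² ) − f(x) is convex on all of ℝ^N. -/
open Set

set_option maxHeartbeats 1000000 in
lemma quartic_ineq (na nu nv w z β : ℝ) (hna : 0 ≤ na) (hnu : 0 ≤ nu) (hnv : 0 ≤ nv)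
    (hz : |z| ≤ na*nu) (hβ : |β| ≤ na*nv) (k : ℕ) (hk : k ≤ 4) (s : ℝ)
    (hs : s = 1 ∨ s = -1) :
    0 ≤ 12*(na+1)^4 * ((1/2)*((2*w)^2 + nu^2*(2*nv^2)) + nv^2)
      - s*((k:ℝ)*(((k-1:ℕ):ℝ)*z^(k-1-1)*β)*β) := by
  have h1 : z^2 ≤ (na*nu)^2 := by
    rw [← sq_abs z]; exact pow_le_pow_left₀ (abs_nonneg z) hz 2
  have h2 : β^2 ≤ (na*nv)^2 := by
    rw [← sq_abs β]; exact pow_le_pow_left₀ (abs_nonneg β) hβ 2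
  have h3 : z^2*β^2 ≤ (na*nu)^2*((na*nv)^2) :=
    mul_le_mul h1 h2 (sq_nonneg β) (by positivity)
  have h4 : na^4 ≤ (na+1)^4 := by nlinarith [pow_nonneg hna 3, pow_nonneg hna 2, pow_nonneg hna 4]
  have h5 : na^3 ≤ (na+1)^4 := by nlinarith [pow_nonneg hna 3, pow_nonneg hna 2, pow_nonneg hna 4]
  have h6 : na^2 ≤ (na+1)^4 := by nlinarith [pow_nonneg hna 3, pow_nonneg hna 2, pow_nonneg hna 4]
  have hp4 : (0:ℝ) ≤ (na+1)^4 := by positivity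
  have hzb1 : z*β^2 ≤ na*nu*β^2 :=
    mul_le_mul_of_nonneg_right (le_trans (le_abs_self z) hz) (sq_nonneg β)
  have hzb2 : -(na*nu*β^2) ≤ z*β^2 := by
    have h' : -(na*nu) ≤ z := by linarith [neg_abs_le z]
    have := mul_le_mul_of_nonneg_right h' (sq_nonneg β)
    linarith
  have hnusq : 2*nu ≤ nu^2 + 1 := by nlinarith [sq_nonneg (nu-1)]
  have key3 : 6*(na*nu*β^2) ≤ 12*(na+1)^4*(nu^2*nv^2 + nv^2) := by
    have e1 : na*nu*β^2 ≤ na*nu*(na^2*nv^2) := by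
      have : β^2 ≤ na^2*nv^2 := by nlinarith [h2]
      exact mul_le_mul_of_nonneg_left this (by positivity)
    have e2 : 2*(na*(na^2*nv^2))*nu ≤ (na*(na^2*nv^2))*(nu^2+1) := by
      have h0 : 0 ≤ na*(na^2*nv^2) := by positivity
      nlinarith [mul_le_mul_of_nonneg_left hnusq h0]
    have e3 : 3*(na^3*(nu^2*nv^2 + nv^2)) ≤ 12*(na+1)^4*(nu^2*nv^2+nv^2) := by
      have h0 : 0 ≤ nu^2*nv^2 + nv^2 := by positivity
      nlinarith [mul_le_mul_of_nonneg_right h5 h0]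
    nlinarith [e1, e2, e3]
  have hq4 : (na*nu)^2*((na*nv)^2) ≤ (na+1)^4*(nu^2*nv^2) := by
    have := mul_le_mul_of_nonneg_right h4 (mul_nonneg (sq_nonneg nu) (sq_nonneg nv))
    nlinarith [this]
  have main : s*((k:ℝ)*(((k-1:ℕ):ℝ)*z^(k-1-1)*β)*β) ≤ 12*(na+1)^4*(nu^2*nv^2+nv^2) := by
    have hrhs : (0:ℝ) ≤ 12*(na+1)^4*(nu^2*nv^2+nv^2) := by positivity
    rcases hs with rfl | rfl <;> interval_cases k <;> norm_num <;>
      nlinarith [h3, hq4, key3, hzb1, hzb2, h2, h6, hrhs, sq_nonneg β, sq_nonneg z,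
        mul_le_mul_of_nonneg_right h6 (sq_nonneg nv),
        mul_nonneg hp4 (mul_nonneg (sq_nonneg nu) (sq_nonneg nv)),
        mul_nonneg hp4 (sq_nonneg nv), mul_nonneg (mul_nonneg (sq_nonneg z) (sq_nonneg β)) (le_refl 0)]
  nlinarith [main, mul_nonneg hp4 (sq_nonneg w)]


lemma conv1D {f f' f'' : ℝ → ℝ} (h1 : ∀ t, HasDerivAt f (f' t) t)
    (h2 : ∀ t, HasDerivAt f' (f'' t) t) (h3 : ∀ t, 0 ≤ f'' t) :
    ConvexOn ℝ Set.univ f := by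
  have hd : deriv f = f' := funext fun t => (h1 t).deriv
  apply convexOn_of_deriv2_nonneg convex_univ
  · exact fun t _ => (h1 t).continuousAt.continuousWithinAt
  · intro t _; exact (h1 t).differentiableAt.differentiableWithinAt
  · intro t _; rw [hd]; exact (h2 t).differentiableAt.differentiableWithinAt
  · intro t _
    have : deriv (deriv f) t = f'' t := by rw [hd]; exact (h2 t).deriv
    simp only [Function.iterate_succ, Function.iterate_zero, Function.comp_apply, Function.id_def]
    rw [this]; exact h3 t

variable {E : Type*} [NormedAddCommGroup E] [InnerProductSpace ℝ E]

lemma line_convex {F : E → ℝ}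
    (h : ∀ x v : E, ConvexOn ℝ Set.univ fun t : ℝ => F (x + t • v)) :
    ConvexOn ℝ Set.univ F := by
  refine ⟨convex_univ, fun x _ y _ a b ha hb hab => ?_⟩
  have h2 := (h x (y - x)).2 (Set.mem_univ (0:ℝ)) (Set.mem_univ (1:ℝ)) ha hb hab
  simp only [smul_zero, smul_eq_mul, mul_zero, mul_one, zero_add, zero_smul, add_zero,
    one_smul] at h2
  have hy : x + (y - x) = y := by abel
  have hx : x + b • (y - x) = a • x + b • y := by
    have : a = 1 - b := by linarith
    rw [this]; module
  rw [hy, hx] at h2; simpa using h2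

lemma atom_conv (a : E) (k : ℕ) (hk : k ≤ 4) (s : ℝ) (hs : s = 1 ∨ s = -1) :
    ConvexOn ℝ Set.univ (fun x : E =>
      12*(‖a‖+1)^4 * ((1/4) * ‖x‖^4 + (1/2) * ‖x‖^2) - s * (inner ℝ a x : ℝ)^k) := by
  set R : ℝ := 12*(‖a‖+1)^4 with hR
  apply line_convex
  intro x v
  set A : ℝ := ‖v‖^2 with hA
  set B : ℝ := (inner ℝ x v : ℝ) with hB
  set C : ℝ := ‖x‖^2 with hC
  set β : ℝ := (inner ℝ a v : ℝ) with hβ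
  set γ : ℝ := (inner ℝ a x : ℝ) with hγ
  have hq : ∀ t : ℝ, ‖x + t • v‖^2 = C + 2*B*t + A*t^2 := by
    intro t
    rw [norm_add_sq_real, real_inner_smul_right, norm_smul]
    simp [mul_pow, sq_abs, hA, hB, hC]
    ring
  have hl : ∀ t : ℝ, (inner ℝ a (x + t • v) : ℝ) = γ + β*t := by
    intro t
    rw [inner_add_right, real_inner_smul_right]
    ring
  have key : (fun t : ℝ => (fun x : E =>
      R * ((1/4) * ‖x‖^4 + (1/2) * ‖x‖^2) - s * (inner ℝ a x : ℝ)^k) (x + t • v))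
      = fun t : ℝ => R * ((1/4)*(C + 2*B*t + A*t^2)^2 + (1/2)*(C + 2*B*t + A*t^2))
          - s * (γ + β*t)^k := by
    funext t
    simp only
    rw [hl, show ‖x + t • v‖^4 = (‖x + t • v‖^2)^2 by ring, hq]
  rw [key]
  apply conv1D
    (f' := fun t : ℝ => R * ((1/2)*(C + 2*B*t + A*t^2)*(2*B + 2*A*t) + (1/2)*(2*B + 2*A*t))
      - s * ((k:ℝ) * (γ + β*t)^(k-1) * β))
    (f'' := fun t : ℝ => R * ((1/2)*((2*B + 2*A*t)^2 + (C + 2*B*t + A*t^2)*(2*A)) + A)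
      - s * ((k:ℝ) * (((k-1:ℕ):ℝ) * (γ + β*t)^(k-1-1) * β) * β))
  · intro t
    have hsq : HasDerivAt (fun t : ℝ => t^2) (2*t) t := by simpa using hasDerivAt_pow 2 t
    have hqd : HasDerivAt (fun t : ℝ => C + 2*B*t + A*t^2) (2*B + 2*A*t) t := by
      have h1 := ((hasDerivAt_const t C).add ((hasDerivAt_id' t).const_mul (2*B))).add
        (hsq.const_mul A)
      refine h1.congr_deriv ?_
      ring
    have hld : HasDerivAt (fun t : ℝ => γ + β*t) β t := by
      have h1 := (hasDerivAt_const t γ).add ((hasDerivAt_id' t).const_mul β)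
      refine h1.congr_deriv ?_
      ring
    have H := (((hqd.pow 2).const_mul (1/4)).add (hqd.const_mul (1/2))).const_mul R
    have H2 := (hld.pow k).const_mul s
    refine (H.sub H2).congr_deriv ?_
    ring
  · intro t
    have hsq : HasDerivAt (fun t : ℝ => t^2) (2*t) t := by simpa using hasDerivAt_pow 2 t
    have hqd : HasDerivAt (fun t : ℝ => C + 2*B*t + A*t^2) (2*B + 2*A*t) t := by
      have h1 := ((hasDerivAt_const t C).add ((hasDerivAt_id' t).const_mul (2*B))).add
        (hsq.const_mul A)
      refine h1.congr_deriv ?_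
      ring
    have hld : HasDerivAt (fun t : ℝ => γ + β*t) β t := by
      have h1 := (hasDerivAt_const t γ).add ((hasDerivAt_id' t).const_mul β)
      refine h1.congr_deriv ?_
      ring
    have H1 : HasDerivAt (fun t : ℝ => R * ((1/2)*(C + 2*B*t + A*t^2)*(2*B + 2*A*t)
        + (1/2)*(2*B + 2*A*t)))
        (R * ((1/2)*((2*B + 2*A*t)^2 + (C + 2*B*t + A*t^2)*(2*A)) + A)) t := by
      have hlin : HasDerivAt (fun t : ℝ => 2*B + 2*A*t) (2*A) t := by
        have h1 := (hasDerivAt_const t (2*B)).add ((hasDerivAt_id' t).const_mul (2*A))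
        refine h1.congr_deriv ?_
        ring
      have := (((hqd.const_mul (1/2:ℝ)).mul hlin).add (hlin.const_mul (1/2:ℝ))).const_mul R
      refine this.congr_deriv ?_
      ring
    have H2 : HasDerivAt (fun t : ℝ => s * ((k:ℝ) * (γ + β*t)^(k-1) * β))
        (s * ((k:ℝ) * (((k-1:ℕ):ℝ) * (γ + β*t)^(k-1-1) * β) * β)) t := by
      have := ((((hld.pow (k-1)).const_mul (k:ℝ)).mul_const β).const_mul s)
      refine this.congr_deriv ?_
      try ring
    exact H1.sub H2
  · intro t
    have e3 : 2*B + 2*A*t = 2*(inner ℝ (x + t • v) v : ℝ) := by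
      rw [inner_add_left, real_inner_smul_left, real_inner_self_eq_norm_sq]
      simp only [hA, hB]; ring
    have e1 : C + 2*B*t + A*t^2 = ‖x + t • v‖^2 := (hq t).symm
    have e2 : γ + β*t = (inner ℝ a (x + t • v) : ℝ) := (hl t).symm
    rw [e3, e1, e2, hA, hR]
    exact quartic_ineq ‖a‖ ‖x + t • v‖ ‖v‖ _ _ _ (norm_nonneg a) (norm_nonneg _)
      (norm_nonneg v) (abs_real_inner_le_norm a _) (abs_real_inner_le_norm a v) k hk s hs

def Good (f : E → ℝ) : Prop := ∃ R : ℝ, 0 < R ∧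
  ConvexOn ℝ Set.univ (fun x => R * ((1/4) * ‖x‖^4 + (1/2) * ‖x‖^2) - f x) ∧
  ConvexOn ℝ Set.univ (fun x => R * ((1/4) * ‖x‖^4 + (1/2) * ‖x‖^2) + f x)

lemma convexOn_congr {f g : E → ℝ} (h : ∀ x, f x = g x)
    (hf : ConvexOn ℝ Set.univ f) : ConvexOn ℝ Set.univ g := by
  rwa [show g = f from funext fun x => (h x).symm]

lemma good_congr {f g : E → ℝ} (h : ∀ x, f x = g x) (hf : Good f) : Good g := by
  obtain ⟨R, hR, h1, h2⟩ := hf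
  exact ⟨R, hR, convexOn_congr (fun x => by rw [h x]) h1,
    convexOn_congr (fun x => by rw [h x]) h2⟩

lemma Good.add {f g : E → ℝ} (hf : Good f) (hg : Good g) : Good (fun x => f x + g x) := by
  obtain ⟨R1, hR1, hf1, hf2⟩ := hf
  obtain ⟨R2, hR2, hg1, hg2⟩ := hg
  exact ⟨R1 + R2, by linarith,
    convexOn_congr (fun x => by simp only [Pi.add_apply]; ring) (hf1.add hg1),
    convexOn_congr (fun x => by simp only [Pi.add_apply]; ring) (hf2.add hg2)⟩

lemma Good.neg {f : E → ℝ} (hf : Good f) : Good (fun x => -f x) := by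
  obtain ⟨R, hR, h1, h2⟩ := hf
  exact ⟨R, hR, convexOn_congr (fun x => by ring) h2,
    convexOn_congr (fun x => by ring) h1⟩

lemma Good.sub {f g : E → ℝ} (hf : Good f) (hg : Good g) : Good (fun x => f x - g x) :=
  good_congr (fun x => by ring) (hf.add hg.neg)

lemma Good.smul {f : E → ℝ} (c : ℝ) (hf : Good f) : Good (fun x => c * f x) := by
  obtain ⟨R, hR, h1, h2⟩ := hf
  have hh : ConvexOn ℝ Set.univ (fun x : E => R * ((1/4) * ‖x‖^4 + (1/2) * ‖x‖^2)) := by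
    have := (h1.add h2).smul (c := (1/2 : ℝ)) (by norm_num)
    exact convexOn_congr (fun x => by simp only [Pi.add_apply, smul_eq_mul]; ring) this
  rcases le_or_gt 0 c with hc | hc
  · refine ⟨(c + 1) * R, by nlinarith, ?_, ?_⟩
    · have := (h1.smul (c := c) hc).add hh
      exact convexOn_congr (fun x => by simp only [Pi.add_apply, smul_eq_mul]; ring) this
    · have := (h2.smul (c := c) hc).add hh
      exact convexOn_congr (fun x => by simp only [Pi.add_apply, smul_eq_mul]; ring) this
  · refine ⟨(-c + 1) * R, by nlinarith, ?_, ?_⟩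
    · have := (h2.smul (c := -c) (by linarith)).add hh
      exact convexOn_congr (fun x => by simp only [Pi.add_apply, smul_eq_mul]; ring) this
    · have := (h1.smul (c := -c) (by linarith)).add hh
      exact convexOn_congr (fun x => by simp only [Pi.add_apply, smul_eq_mul]; ring) this

lemma good_inner_pow (a : E) (k : ℕ) (hk : k ≤ 4) : Good (fun x => (inner ℝ a x : ℝ)^k) := by
  refine ⟨12*(‖a‖+1)^4, by positivity, ?_, ?_⟩
  · exact convexOn_congr (fun x => by ring) (atom_conv a k hk 1 (Or.inl rfl))
  · exact convexOn_congr (fun x => by ring) (atom_conv a k hk (-1) (Or.inr rfl))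

lemma good_one : Good (fun _ : E => (1:ℝ)) :=
  good_congr (fun x => by simp) (good_inner_pow (0 : E) 0 (by norm_num))

lemma good_zero : Good (fun _ : E => (0:ℝ)) :=
  good_congr (fun x => by ring) (Good.smul 0 good_one)

lemma good_finsum {ι : Type*} (s : Finset ι) (F : ι → E → ℝ)
    (h : ∀ i ∈ s, Good (F i)) : Good (fun x => ∑ i ∈ s, F i x) := by
  induction s using Finset.cons_induction with
  | empty => exact good_congr (fun x => by simp) good_zero
  | cons a s ha ih =>
    have := (h a (Finset.mem_cons_self a s)).add
      (ih fun i hi => h i (Finset.mem_cons_of_mem hi))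
    exact good_congr (fun x => by rw [Finset.sum_cons]) this

variable {N : ℕ}

local notation "E'" => EuclideanSpace ℝ (Fin N)

lemma good_lin (i : Fin N) (c2 c3 c4 : ℝ) (j k m : Fin N) (l : ℕ) (hl : l ≤ 4) :
    Good (fun x : E' => (x i + c2 * x j + c3 * x k + c4 * x m)^l) := by
  have h := good_inner_pow (EuclideanSpace.single i (1:ℝ) + c2 • EuclideanSpace.single j 1
    + c3 • EuclideanSpace.single k 1 + c4 • EuclideanSpace.single m 1) l hl
  refine good_congr (fun x => ?_) h
  congr 1
  simp [inner_add_left, real_inner_smul_left, EuclideanSpace.inner_single_left]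

lemma good_prod4 (i j k m : Fin N) : Good (fun x : E' => x i * x j * x k * x m) := by
  have T : ∀ c2 c3 c4 : ℝ, Good (fun x : E' => (x i + c2 * x j + c3 * x k + c4 * x m)^4) :=
    fun c2 c3 c4 => good_lin i c2 c3 c4 j k m 4 (le_refl 4)
  have comb := ((((((((T 1 1 1).sub (T 1 1 (-1))).sub (T 1 (-1) 1)).add
    (T 1 (-1) (-1))).sub (T (-1) 1 1)).add (T (-1) 1 (-1))).add
    (T (-1) (-1) 1)).sub (T (-1) (-1) (-1))).smul (1/192)
  refine good_congr (fun x => ?_) comb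
  ring
lemma good_prod3 (i j k : Fin N) : Good (fun x : E' => x i * x j * x k) := by
  have T : ∀ c2 c3 : ℝ, Good (fun x : E' => (x i + c2 * x j + c3 * x k + 0 * x k)^3) :=
    fun c2 c3 => good_lin i c2 c3 0 j k k 3 (by norm_num)
  have comb := ((((T 1 1).sub (T 1 (-1))).sub (T (-1) 1)).add (T (-1) (-1))).smul (1/24)
  refine good_congr (fun x => ?_) comb
  ring

lemma good_prod2 (i j : Fin N) : Good (fun x : E' => x i * x j) := by
  have T : ∀ c2 : ℝ, Good (fun x : E' => (x i + c2 * x j + 0 * x j + 0 * x j)^2) :=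
    fun c2 => good_lin i c2 0 0 j j j 2 (by norm_num)
  have comb := ((T 1).sub (T (-1))).smul (1/4)
  refine good_congr (fun x => ?_) comb
  ring

lemma good_prod1 (i : Fin N) : Good (fun x : E' => x i) := by
  have T := good_lin i 0 0 0 i i i 1 (by norm_num)
  refine good_congr (fun x => ?_) T
  ring

lemma good_monomial (α : Fin N →₀ ℕ) (hα : (α.sum fun _ e => e) ≤ 4) (c : ℝ) :
    Good (fun x : E' => c * α.prod fun n e => x n ^ e) := by
  have hprod : ∀ x : E', (α.toMultiset.map fun j => x j).prod = α.prod fun n e => x n ^ e := by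
    intro x
    rw [Finsupp.toMultiset_map, Finsupp.prod_toMultiset,
      Finsupp.prod_mapDomain_index (fun b => pow_zero b) (fun b m n => pow_add _ _ _)]
  set l := α.toMultiset.toList with hldef
  have hlist : ∀ x : E', ((l.map fun j => x j).prod : ℝ) = α.prod fun n e => x n ^ e := by
    intro x
    rw [← hprod x, ← Multiset.coe_toList α.toMultiset, ← hldef]
    simp
  have hlen : l.length ≤ 4 := by
    have h1 := Finsupp.card_toMultiset α
    have h2 : (α.sum fun _ => id) = α.sum fun _ e => e := rfl
    rw [hldef, Multiset.length_toList]
    omega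
  have base : Good (fun x : E' => (l.map fun j => x j).prod) := by
    clear hlist hldef
    rcases l with _|⟨i, _|⟨j, _|⟨k, _|⟨m, _|rest⟩⟩⟩⟩
    · exact good_congr (fun x => by simp) good_one
    · exact good_congr (fun x => by simp) (good_prod1 i)
    · exact good_congr (fun x => by simp) (good_prod2 i j)
    · exact good_congr (fun x => by simp [List.prod_cons]; ring) (good_prod3 i j k)
    · exact good_congr (fun x => by simp [List.prod_cons]; ring) (good_prod4 i j k m)
    · simp at hlen; omega
  exact good_congr (fun x => by rw [hlist x]) (base.smul c)


/-- Relative smoothness of quartic polynomials with respect to the quartic kernel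
`h(x) = (1/4)‖x‖⁴ + (1/2)‖x‖²`: for every real polynomial `p` in `N` variables of total
degree at most `4`, there exists `R > 0` such that `x ↦ R·h(x) − p(x)` is convex on `ℝ^N`. -/
theorem stmt12 (N : ℕ) (hN : 1 ≤ N)
    (p : MvPolynomial (Fin N) ℝ) (hp : p.totalDegree ≤ 4) :
    ∃ R : ℝ, 0 < R ∧ ConvexOn ℝ Set.univ (fun x : EuclideanSpace ℝ (Fin N) =>
      R * ((1 / 4) * ‖x‖ ^ 4 + (1 / 2) * ‖x‖ ^ 2) - MvPolynomial.eval (fun i => x i) p) := by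
  have hgood : Good (fun x : EuclideanSpace ℝ (Fin N) => MvPolynomial.eval (fun i => x i) p) := by
    have he : (fun x : EuclideanSpace ℝ (Fin N) => MvPolynomial.eval (fun i => x i) p)
        = fun x => ∑ α ∈ p.support, MvPolynomial.coeff α p * α.prod fun n e => x n ^ e := by
      funext x
      rw [MvPolynomial.eval_eq]
      rfl
    rw [he]
    apply good_finsum
    intro α hα
    exact good_monomial α (le_trans (MvPolynomial.le_totalDegree hα) hp) _
  obtain ⟨R, hR, h1, _⟩ := hgood
  exact ⟨R, hR, h1⟩
end
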